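/- arXiv:1907.10724 — 13 statements merged into one kernel-verified Lean document; each statement's English description precedes it below -/
import Mathlib

section
/- Let r, s, L be nonnegative integers with r < L and let x ∈ 𝔽₂^L. Then B(x,r) = ⋂_{z ∈ W_s} B(x+z, r+s) if and only if r + 2s + 1 ≤ L. -/
/-- The Hamming ball of radius `ρ` centered at `x` in `𝔽₂^L`. -/
def pball (L : ℕ) (x : Fin L → ZMod 2) (ρ : ℕ) : Set (Fin L → ZMod 2) :=
  {y | hammingDist x y ≤ ρ}

section Aux

variable {L : ℕ}

lemma zmod2_cases (a : ZMod 2) : a = 0 ∨ a = 1 := by revert a; decide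

lemma dist_eq_norm_add (a b : Fin L → ZMod 2) :
    hammingDist a b = hammingNorm (a + b) := by
  rw [hammingDist_eq_hammingNorm]
  congr 1
  funext i
  have : ∀ u v : ZMod 2, -u + v = u + v := by decide
  exact this (a i) (b i)

lemma norm_eq_card (e : Fin L → ZMod 2) :
    hammingNorm e = (Finset.univ.filter fun i => e i ≠ 0).card := rfl

/-- indicator vector of a finset -/
def chi (S : Finset (Fin L)) : Fin L → ZMod 2 := fun i => if i ∈ S then 1 else 0

lemma norm_chi (S : Finset (Fin L)) : hammingNorm (chi S) = S.card := by
  rw [norm_eq_card]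
  congr 1
  ext i
  simp [chi]

lemma norm_add_chi (e : Fin L → ZMod 2) (S : Finset (Fin L)) :
    hammingNorm (e + chi S) = (symmDiff (Finset.univ.filter fun i => e i ≠ 0) S).card := by
  rw [norm_eq_card]
  congr 1
  ext i
  rw [Finset.mem_filter]
  rcases zmod2_cases (e i) with h | h <;>
    by_cases hi : i ∈ S <;>
      simp [Finset.mem_symmDiff, Finset.mem_filter, chi, h, hi, (by decide : (1:ZMod 2)+1 = 0)]

lemma norm_one : hammingNorm (fun _ : Fin L => (1 : ZMod 2)) = L := by
  rw [norm_eq_card]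
  simp

lemma norm_add_one (z : Fin L → ZMod 2) :
    hammingNorm (fun i => z i + 1) = L - hammingNorm z := by
  rw [norm_eq_card, norm_eq_card]
  have h2 : (Finset.univ.filter fun i => z i + 1 ≠ 0) =
      Finset.univ \ (Finset.univ.filter fun i => z i ≠ 0) := by
    ext i
    rcases zmod2_cases (z i) with h | h <;>
      simp [h, (by decide : (1:ZMod 2)+1 = 0)]
  rw [h2, Finset.card_sdiff_of_subset (Finset.filter_subset _ _)]
  simp

end Aux

theorem stmt0 (L r s : ℕ) (hr : r < L) (x : Fin L → ZMod 2) :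
    (pball L x r =
      ⋂ z ∈ {z : Fin L → ZMod 2 | hammingNorm z = s}, pball L (x + z) (r + s)) ↔
    r + 2 * s + 1 ≤ L := by
  constructor
  · intro heq
    -- use y = x + 1
    set one : Fin L → ZMod 2 := fun _ => 1 with hone
    have hy : (x + one) ∉ pball L x r := by
      simp only [pball, Set.mem_setOf_eq, not_le]
      rw [dist_eq_norm_add]
      have : x + (x + one) = one := by
        funext i
        have : ∀ u : ZMod 2, u + (u + 1) = 1 := by decide
        exact this _
      rw [this, norm_one]
      exact hr
    rw [heq] at hy
    simp only [Set.mem_iInter, not_forall] at hy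
    obtain ⟨z, hz, hd⟩ := hy
    simp only [Set.mem_setOf_eq] at hz
    simp only [pball, Set.mem_setOf_eq, not_le] at hd
    rw [dist_eq_norm_add] at hd
    have hzx : x + z + (x + one) = fun i => z i + 1 := by
      funext i
      have h3 : ∀ u v : ZMod 2, u + v + (u + 1) = v + 1 := by decide
      exact h3 _ _
    rw [hzx, norm_add_one, hz] at hd
    have hsL : s ≤ L := by
      rw [← hz]
      exact (hammingNorm_le_card_fintype).trans_eq (by simp)
    omega
  · intro hL
    have hsL : s ≤ L := by omega
    apply Set.Subset.antisymm
    · intro y hy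
      simp only [pball, Set.mem_setOf_eq] at hy
      simp only [Set.mem_iInter, pball, Set.mem_setOf_eq]
      intro z hz
      replace hz : hammingNorm z = s := hz
      calc hammingDist (x + z) y ≤ hammingDist (x + z) x + hammingDist x y :=
            hammingDist_triangle _ _ _
        _ ≤ s + r := by
            apply Nat.add_le_add _ hy
            rw [dist_eq_norm_add]
            have : x + z + x = z := by
              funext i
              have : ∀ u v : ZMod 2, u + v + u = v := by decide
              exact this _ _
            rw [this, hz]
        _ = r + s := by omega
    · intro y hy
      simp only [pball, Set.mem_setOf_eq]
      by_contra hyr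
      push_neg at hyr
      set e := x + y with he
      set E : Finset (Fin L) := Finset.univ.filter fun i => e i ≠ 0 with hE
      have htE : hammingDist x y = E.card := by rw [dist_eq_norm_add]; rfl
      set t := E.card with ht
      have htr : r < t := htE ▸ hyr
      have htL : t ≤ L := by
        have h := Finset.card_le_univ E
        rw [Fintype.card_fin] at h
        exact ht ▸ h
      set k := s - (L - t) with hk
      have hkE : k ≤ E.card := by omega
      obtain ⟨T, hTE, hTcard⟩ := Finset.exists_subset_card_eq (s := E) (n := k) hkE
      have hcompl : Eᶜ.card = L - t := by
        rw [Finset.card_compl, Fintype.card_fin]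
      have hskc : s - k ≤ Eᶜ.card := by omega
      obtain ⟨U, hUE, hUcard⟩ := Finset.exists_subset_card_eq (s := Eᶜ) (n := s - k) hskc
      set S := T ∪ U with hS
      have hTU : Disjoint T U := by
        apply Finset.disjoint_left.mpr
        intro i hiT hiU
        exact (Finset.mem_compl.mp (hUE hiU)) (hTE hiT)
      have hScard : S.card = s := by
        rw [hS, Finset.card_union_of_disjoint hTU, hTcard, hUcard]
        omega
      have hsym : symmDiff E S = (E \ T) ∪ U := by
        ext i
        have h1 : i ∈ T → i ∈ E := fun h => hTE h
        have h2 : i ∈ U → i ∉ E := fun h => Finset.mem_compl.mp (hUE h)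
        simp only [Finset.mem_symmDiff, Finset.mem_union, Finset.mem_sdiff, hS]
        tauto
      have hsymcard : (symmDiff E S).card = (t - k) + (s - k) := by
        rw [hsym, Finset.card_union_of_disjoint, Finset.card_sdiff_of_subset hTE, hTcard, hUcard]
        apply Finset.disjoint_left.mpr
        intro i hi hiU
        exact (Finset.mem_compl.mp (hUE hiU)) (Finset.mem_sdiff.mp hi).1
      -- the bad center
      have hmem : y ∈ ⋂ z ∈ {z : Fin L → ZMod 2 | hammingNorm z = s}, pball L (x + z) (r + s) :=
        hy
      have := Set.mem_iInter.mp hmem (chi S)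
      have hzball := Set.mem_iInter.mp this (by simp [Set.mem_setOf_eq, norm_chi, hScard])
      simp only [pball, Set.mem_setOf_eq] at hzball
      rw [dist_eq_norm_add] at hzball
      have hrw : x + chi S + y = e + chi S := by
        funext i
        have : ∀ u v w : ZMod 2, u + v + w = (u + w) + v := by decide
        exact this _ _ _
      rw [hrw, norm_add_chi, ← hE, hsymcard] at hzball
      omega
end

section
/- Let r, s, L be nonnegative integers with s ≥ 1 and L ≥ 2s + r + 1, and let C ⊆ W_s be an (L,s,r) PPRIC code. If v ∈ 𝔽₂^L satisfies supp(v) ∩ supp(c) ≠ ∅ for every c ∈ C, then wt(v) ≥ r + 3. -/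
/-- `C` is an `(L,s,r)` PPRIC code: a set of words of Hamming weight exactly `s`
such that `B(0,r) = ⋂_{c ∈ C} B(c, r+s)`. -/
def IsPPRIC (L s r : ℕ) (C : Set (Fin L → ZMod 2)) : Prop :=
  (∀ c ∈ C, hammingNorm c = s) ∧
  pball L 0 r = ⋂ c ∈ C, pball L c (r + s)

lemma zmod2_ne_zero {a : ZMod 2} (h : a ≠ 0) : a = 1 := by revert h; revert a; decide

lemma dist_add_two_le {L : ℕ} (c y : Fin L → ZMod 2) (i : Fin L)
    (hc : c i ≠ 0) (hy : y i ≠ 0) :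
    hammingDist c y + 2 ≤ hammingNorm c + hammingNorm y := by
  classical
  unfold hammingDist hammingNorm
  set A : Finset (Fin L) := {j | c j ≠ 0} with hA
  set B : Finset (Fin L) := {j | y j ≠ 0} with hB
  have hsub : (Finset.univ.filter (fun i => c i ≠ y i)) ⊆ (A ∪ B) \ (A ∩ B) := by
    intro j hj
    simp only [Finset.mem_filter, Finset.mem_univ, true_and] at hj
    simp only [Finset.mem_sdiff, Finset.mem_union, Finset.mem_inter, hA, hB,
      Finset.mem_filter, Finset.mem_univ, true_and]
    rcases eq_or_ne (c j) 0 with h1 | h1 <;> rcases eq_or_ne (y j) 0 with h2 | h2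
    · exact absurd (h1.trans h2.symm) hj
    · exact ⟨Or.inr h2, fun ⟨a, _⟩ => a h1⟩
    · exact ⟨Or.inl h1, fun ⟨_, b⟩ => b h2⟩
    · exact absurd ((zmod2_ne_zero h1).trans (zmod2_ne_zero h2).symm) hj
  have hi : i ∈ A ∩ B := by
    simp [hA, hB, Finset.mem_inter, hc, hy]
  have h1 : (Finset.univ.filter (fun i => c i ≠ y i)).card + (A ∩ B).card ≤ (A ∪ B).card := by
    have := Finset.card_le_card hsub
    have hd : ((A ∪ B) \ (A ∩ B)).card = (A ∪ B).card - (A ∩ B).card :=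
      Finset.card_sdiff_of_subset (Finset.inter_subset_union)
    have hle : (A ∩ B).card ≤ (A ∪ B).card :=
      Finset.card_le_card Finset.inter_subset_union
    omega
  have h2 : (A ∪ B).card + (A ∩ B).card = A.card + B.card := Finset.card_union_add_card_inter A B
  have h3 : 1 ≤ (A ∩ B).card := Finset.card_pos.mpr ⟨i, hi⟩
  omega

theorem stmt1 (L r s : ℕ) (hs : 1 ≤ s) (hL : 2 * s + r + 1 ≤ L)
    (C : Set (Fin L → ZMod 2)) (hC : IsPPRIC L s r C)
    (v : Fin L → ZMod 2)
    (hv : ∀ c ∈ C, ∃ i : Fin L, v i ≠ 0 ∧ c i ≠ 0) :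
    r + 3 ≤ hammingNorm v := by
  classical
  by_contra hlt
  push_neg at hlt
  -- wt v ≤ r + 2
  -- construct y with supp v ⊆ supp y, r+1 ≤ wt y ≤ r+2
  obtain ⟨y, hsupp, h1, h2⟩ : ∃ y : Fin L → ZMod 2,
      (∀ i, v i ≠ 0 → y i ≠ 0) ∧ r + 1 ≤ hammingNorm y ∧ hammingNorm y ≤ r + 2 := by
    by_cases hcase : r + 1 ≤ hammingNorm v
    · exact ⟨v, fun i h => h, hcase, by omega⟩
    · obtain ⟨S, hS1, _, hS3⟩ := Finset.exists_subsuperset_card_eq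
        (Finset.subset_univ ({i | v i ≠ 0} : Finset (Fin L)))
        (le_of_lt (show _ < r + 1 by simpa [hammingNorm] using not_le.mp hcase))
        (by simp [Finset.card_univ]; omega)
      refine ⟨fun i => if i ∈ S then 1 else 0, ?_, ?_, ?_⟩
      · intro i h
        have : i ∈ S := hS1 (by simp [h])
        simp [this]
      · have : hammingNorm (fun i => if i ∈ S then (1 : ZMod 2) else 0) = S.card := by
          unfold hammingNorm
          congr 1
          ext j
          by_cases hj : j ∈ S <;> simp [hj]
        omega
      · have : hammingNorm (fun i => if i ∈ S then (1 : ZMod 2) else 0) = S.card := by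
          unfold hammingNorm
          congr 1
          ext j
          by_cases hj : j ∈ S <;> simp [hj]
        omega
  have hy : y ∈ ⋂ c ∈ C, pball L c (r + s) := by
    simp only [Set.mem_iInter]
    intro c hc
    obtain ⟨i, hvi, hci⟩ := hv c hc
    have := dist_add_two_le c y i hci (hsupp i hvi)
    have hwc := hC.1 c hc
    simp only [pball, Set.mem_setOf_eq]
    omega
  rw [← hC.2] at hy
  simp only [pball, Set.mem_setOf_eq, hammingDist_zero_left] at hy
  omega
end

section
/- Let r, s, L be nonnegative integers with s ≥ 1 and L ≥ 2s + r + 1. Then every (L,s,r) PPRIC code C has at least r + 3 codewords, i.e., |C| ≥ r + 3. -/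
theorem stmt2 (L r s : ℕ) (hs : 1 ≤ s) (hL : 2 * s + r + 1 ≤ L)
    (C : Finset (Fin L → ZMod 2)) (hC : IsPPRIC L s r ↑C) :
    r + 3 ≤ C.card := by
  classical
  by_contra hcard
  push_neg at hcard
  have hcard' : C.card ≤ r + 2 := by omega
  have hLpos : 0 < L := by omega
  -- support of a word
  set supp : (Fin L → ZMod 2) → Finset (Fin L) :=
    fun c => Finset.univ.filter (fun i => c i ≠ 0) with hsupp
  have hsupp_card : ∀ c, (supp c).card = hammingNorm c := fun c => rfl
  -- pick a point in each codeword's support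
  have hne : ∀ c ∈ C, (supp c).Nonempty := by
    intro c hc
    rw [← Finset.card_pos, hsupp_card, hC.1 c (by exact_mod_cast hc)]
    omega
  set f : (Fin L → ZMod 2) → Fin L :=
    fun c => if h : (supp c).Nonempty then h.choose else ⟨0, hLpos⟩ with hf
  have hfmem : ∀ c ∈ C, f c ∈ supp c := by
    intro c hc
    simp only [hf, dif_pos (hne c hc)]
    exact (hne c hc).choose_spec
  set H : Finset (Fin L) := C.image f with hH
  have hHcard : H.card ≤ r + 2 := le_trans (Finset.card_image_le) hcard'
  obtain ⟨T, hHT, -, hTcard⟩ :=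
    Finset.exists_subsuperset_card_eq (H.subset_univ) hHcard
      (by simp [Finset.card_univ]; omega)
  -- the word with support T
  set y : Fin L → ZMod 2 := fun i => if i ∈ T then 1 else 0 with hy
  have hynorm : hammingNorm y = r + 2 := by
    rw [← hTcard]
    unfold hammingNorm
    congr 1
    ext i
    by_cases h : i ∈ T <;> simp [hy, h]
  have hynot : y ∉ pball L 0 r := by
    simp only [pball, Set.mem_setOf_eq, hammingDist_zero_left, hynorm]
    omega
  rw [hC.2] at hynot
  simp only [Set.mem_iInter, not_forall] at hynot
  obtain ⟨c, hc, hcy⟩ := hynot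
  have hcC : c ∈ C := by exact_mod_cast hc
  simp only [pball, Set.mem_setOf_eq, not_le] at hcy
  -- now bound hammingDist c y
  have hi0 : f c ∈ supp c ∩ T := by
    refine Finset.mem_inter.2 ⟨hfmem c hcC, hHT ?_⟩
    exact Finset.mem_image_of_mem f hcC
  have hinter : 1 ≤ (supp c ∩ T).card := Finset.card_pos.2 ⟨f c, hi0⟩
  have hsub : Finset.univ.filter (fun i => c i ≠ y i) ⊆ (supp c ∪ T) \ (supp c ∩ T) := by
    intro i hi
    simp only [Finset.mem_filter, Finset.mem_univ, true_and] at hi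
    simp only [Finset.mem_sdiff, Finset.mem_union, Finset.mem_inter, hsupp,
      Finset.mem_filter, Finset.mem_univ, true_and]
    constructor
    · by_contra h
      push_neg at h
      apply hi
      rw [h.1, hy]
      simp [h.2]
    · rintro ⟨hci, hiT⟩
      apply hi
      have h1 : c i = 1 := by
        revert hci
        generalize c i = a
        revert a
        decide
      rw [h1, hy]
      simp [hiT]
  have hdist : hammingDist c y ≤ r + s := by
    unfold hammingDist
    calc (Finset.univ.filter (fun i => c i ≠ y i)).card
        ≤ ((supp c ∪ T) \ (supp c ∩ T)).card := Finset.card_le_card hsub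
      _ = (supp c ∪ T).card - (supp c ∩ T).card :=
          Finset.card_sdiff_of_subset (Finset.inter_subset_union)
      _ ≤ r + s := by
          have h1 : (supp c ∪ T).card ≤ (supp c).card + T.card := Finset.card_union_le _ _
          have h2 : (supp c).card = s := by rw [hsupp_card, hC.1 c hc]
          have h3 : (supp c ∪ T).card = (supp c).card + T.card - (supp c ∩ T).card :=
            by rw [Finset.card_union]
          omega
  omega
end

section
/- Let r, s, L be nonnegative integers with s ≥ 1 and L ≥ 2s + r + 1, let C be an (L,s,r) PPRIC code, and set σ = s/L. Then for every integer k with 0 ≤ k ≤ r + 1, it holds that (|C| : ℝ) ≥ (r + 3 − k) / (1 − σ)^k. -/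
open Finset

/-- support as a finset -/
def psupp {L : ℕ} (c : Fin L → ZMod 2) : Finset (Fin L) :=
  Finset.univ.filter (fun i => c i ≠ 0)

lemma psupp_card {L : ℕ} (c : Fin L → ZMod 2) : (psupp c).card = hammingNorm c := rfl

lemma zmod2_ne_one {a : ZMod 2} (h : a ≠ 1) : a = 0 := by revert h; revert a; decide

/-- Key lemma: any coordinate set of size ≤ r+2 is avoided by some codeword's support. -/
lemma lemA {L r s : ℕ} (hs : 1 ≤ s) (hL : 2 * s + r + 1 ≤ L)
    (C : Finset (Fin L → ZMod 2)) (hC : IsPPRIC L s r ↑C)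
    (T : Finset (Fin L)) (hT : T.card ≤ r + 2) :
    ∃ c ∈ C, ∀ i ∈ T, c i = 0 := by
  have hLr : r + 2 ≤ Fintype.card (Fin L) := by
    simp only [Fintype.card_fin]; omega
  obtain ⟨T', hTT', hT'⟩ := Finset.exists_superset_card_eq hT hLr
  set y : Fin L → ZMod 2 := fun i => if i ∈ T' then 1 else 0 with hy
  have hyfilt : ({i | y i ≠ 0} : Finset (Fin L)) = T' := by
    ext i
    simp only [Finset.mem_filter, Finset.mem_univ, true_and, hy]
    by_cases h : i ∈ T' <;> simp [h]
  have hynorm : hammingNorm y = r + 2 := by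
    rw [← hT']; exact congrArg Finset.card hyfilt
  have hynot : y ∉ pball L 0 r := by
    simp only [pball, Set.mem_setOf_eq, hammingDist_zero_left, hynorm]
    omega
  rw [hC.2] at hynot
  simp only [Set.mem_iInter, not_forall] at hynot
  obtain ⟨c, hcC, hcy⟩ := hynot
  simp only [pball, Set.mem_setOf_eq, not_le] at hcy
  refine ⟨c, hcC, ?_⟩
  -- show supp c ∩ T' = ∅
  have hdisj : ∀ j ∈ T', c j = 0 := by
    by_contra hcon
    push_neg at hcon
    obtain ⟨j, hjT', hj0⟩ := hcon
    -- then hammingDist c y ≤ r + s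
    have hsub : ({i | c i ≠ y i} : Finset (Fin L)) ⊆
        ((psupp c).erase j) ∪ (T'.erase j) := by
      intro i hi
      simp only [Finset.mem_filter, Finset.mem_univ, true_and] at hi
      simp only [Finset.mem_union, Finset.mem_erase]
      by_cases hiT : i ∈ T'
      · have hyi : y i = 1 := by simp [hy, hiT]
        rw [hyi] at hi
        have hci : c i = 0 := zmod2_ne_one hi
        have hij : i ≠ j := by rintro rfl; exact hj0 hci
        exact Or.inr ⟨hij, hiT⟩
      · have hyi : y i = 0 := by simp [hy, hiT]
        rw [hyi] at hi
        have hij : i ≠ j := by rintro rfl; exact hiT hjT'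
        exact Or.inl ⟨hij, by simp [psupp, hi]⟩
    have hjc : j ∈ psupp c := by simp [psupp, hj0]
    have h1 : ((psupp c).erase j).card ≤ s - 1 := by
      have := Finset.card_erase_of_mem hjc
      rw [this, psupp_card, hC.1 c hcC]
    have h2 : (T'.erase j).card ≤ r + 1 := by
      rw [Finset.card_erase_of_mem hjT', hT']
      omega
    have hd : hammingDist c y ≤ (s - 1) + (r + 1) := by
      calc hammingDist c y ≤ (((psupp c).erase j) ∪ (T'.erase j)).card :=
            Finset.card_le_card hsub
        _ ≤ ((psupp c).erase j).card + (T'.erase j).card := Finset.card_union_le _ _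
        _ ≤ (s - 1) + (r + 1) := Nat.add_le_add h1 h2
    omega
  exact fun i hi => hdisj i (hTT' hi)

/-- Transversal bound: the subfamily avoiding a set P of k ≤ r+1 points has ≥ r+3-k members. -/
lemma lemB {L r s : ℕ} (hs : 1 ≤ s) (hL : 2 * s + r + 1 ≤ L)
    (C : Finset (Fin L → ZMod 2)) (hC : IsPPRIC L s r ↑C)
    (P : Finset (Fin L)) :
    r + 3 ≤ (C.filter (fun c => ∀ i ∈ P, c i = 0)).card + P.card := by
  set F := C.filter (fun c => ∀ i ∈ P, c i = 0) with hF
  by_contra hcon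
  push_neg at hcon
  have hL0 : 0 < L := by omega
  -- pick a point in each support
  set f : (Fin L → ZMod 2) → Fin L := fun c =>
    if h : (psupp c).Nonempty then (psupp c).min' h else ⟨0, hL0⟩ with hf
  set T : Finset (Fin L) := P ∪ F.image f with hT
  have hTcard : T.card ≤ r + 2 := by
    calc T.card ≤ P.card + (F.image f).card := Finset.card_union_le _ _
      _ ≤ P.card + F.card := by
          exact Nat.add_le_add_left (Finset.card_image_le) _
      _ ≤ r + 2 := by omega
  obtain ⟨c, hcC, hc0⟩ := lemA hs hL C hC T hTcard
  have hcF : c ∈ F := by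
    rw [hF, Finset.mem_filter]
    exact ⟨hcC, fun i hi => hc0 i (hT ▸ Finset.mem_union_left _ hi)⟩
  have hne : (psupp c).Nonempty := by
    rw [← Finset.card_pos, psupp_card, hC.1 c hcC]; omega
  have hfc : f c ∈ psupp c := by
    rw [hf]; simp only [dif_pos hne]; exact Finset.min'_mem _ _
  have hfcT : f c ∈ T := by
    rw [hT]
    exact Finset.mem_union_right _ (Finset.mem_image_of_mem f hcF)
  have : c (f c) = 0 := hc0 _ hfcT
  simp only [psupp, Finset.mem_filter] at hfc
  exact hfc.2 this

/-- Averaging step. -/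
lemma lemC {L r s : ℕ} (hs : 1 ≤ s) (hL : 2 * s + r + 1 ≤ L)
    (C : Finset (Fin L → ZMod 2)) (hC : IsPPRIC L s r ↑C)
    (P : Finset (Fin L)) (hP : P.card ≤ r + 1) :
    ∃ x, x ∉ P ∧
      L * (C.filter (fun c => ∀ i ∈ insert x P, c i = 0)).card
        + s * (C.filter (fun c => ∀ i ∈ P, c i = 0)).card
      ≤ L * (C.filter (fun c => ∀ i ∈ P, c i = 0)).card := by
  set F := C.filter (fun c => ∀ i ∈ P, c i = 0) with hF
  set U : Finset (Fin L) := Finset.univ \ P with hU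
  have hUcard : U.card = L - P.card := by
    rw [hU, Finset.card_sdiff_of_subset (Finset.subset_univ P)]
    simp
  have hUne : U.Nonempty := by
    rw [← Finset.card_pos, hUcard]; omega
  clear_value F U
  -- double counting
  have hsum : ∑ x ∈ U, (F.filter (fun c => c x ≠ 0)).card = s * F.card := by
    have h1 : ∀ x, (F.filter (fun c => c x ≠ 0)).card
        = ∑ c ∈ F, (if c x ≠ 0 then 1 else 0) := by
      intro x; rw [Finset.card_filter]
    calc ∑ x ∈ U, (F.filter (fun c => c x ≠ 0)).card
        = ∑ x ∈ U, ∑ c ∈ F, (if c x ≠ 0 then 1 else 0) := by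
          exact Finset.sum_congr rfl (fun x _ => h1 x)
      _ = ∑ c ∈ F, ∑ x ∈ U, (if c x ≠ 0 then 1 else 0) := Finset.sum_comm
      _ = ∑ c ∈ F, (U.filter (fun x => c x ≠ 0)).card := by
          refine Finset.sum_congr rfl (fun c _ => ?_)
          rw [Finset.card_filter]
      _ = ∑ c ∈ F, s := by
          refine Finset.sum_congr rfl (fun c hc => ?_)
          rw [hF, Finset.mem_filter] at hc
          have : U.filter (fun x => c x ≠ 0) = psupp c := by
            ext x
            simp only [hU, Finset.mem_filter, Finset.mem_sdiff, Finset.mem_univ,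
              true_and, psupp]
            constructor
            · rintro ⟨_, h⟩; exact h
            · intro h
              refine ⟨fun hxP => h (hc.2 x hxP), h⟩
          rw [this, psupp_card, hC.1 c hc.1]
      _ = s * F.card := by rw [Finset.sum_const, smul_eq_mul, mul_comm]
  -- there is x ∈ U with U.card * hits x ≥ s * F.card
  have hex : ∃ x ∈ U, s * F.card ≤ U.card * (F.filter (fun c => c x ≠ 0)).card := by
    by_contra hcon
    push_neg at hcon
    have : ∑ x ∈ U, U.card * (F.filter (fun c => c x ≠ 0)).card
        < ∑ _x ∈ U, s * F.card := by
      exact Finset.sum_lt_sum_of_nonempty hUne (fun x hx => hcon x hx)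
    rw [Finset.sum_const, ← Finset.mul_sum, hsum, smul_eq_mul] at this
    exact absurd this (lt_irrefl _)
  obtain ⟨x, hxU, hx⟩ := hex
  have hxP : x ∉ P := by
    rw [hU, Finset.mem_sdiff] at hxU; exact hxU.2
  refine ⟨x, hxP, ?_⟩
  have hsplit : (C.filter (fun c => ∀ i ∈ insert x P, c i = 0)).card
      + (F.filter (fun c => c x ≠ 0)).card = F.card := by
    have h1 : C.filter (fun c => ∀ i ∈ insert x P, c i = 0)
        = F.filter (fun c => c x = 0) := by
      rw [hF, Finset.filter_filter]
      refine Finset.filter_congr (fun c _ => ?_)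
      simp only [Finset.mem_insert]
      constructor
      · intro h
        exact ⟨fun i hi => h i (Or.inr hi), h x (Or.inl rfl)⟩
      · rintro ⟨h1, h2⟩ i (rfl | hi)
        · exact h2
        · exact h1 i hi
    rw [h1]
    exact Finset.card_filter_add_card_filter_not _
  have hUL : U.card ≤ L := by rw [hUcard]; exact Nat.sub_le L _
  have hxL : s * F.card ≤ L * (F.filter (fun c => c x ≠ 0)).card := by
    calc s * F.card ≤ U.card * (F.filter (fun c => c x ≠ 0)).card := hx
      _ ≤ L * (F.filter (fun c => c x ≠ 0)).card := Nat.mul_le_mul_right _ hUL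
  calc L * (C.filter (fun c => ∀ i ∈ insert x P, c i = 0)).card + s * F.card
      ≤ L * (C.filter (fun c => ∀ i ∈ insert x P, c i = 0)).card
        + L * (F.filter (fun c => c x ≠ 0)).card := Nat.add_le_add_left hxL _
    _ = L * ((C.filter (fun c => ∀ i ∈ insert x P, c i = 0)).card
        + (F.filter (fun c => c x ≠ 0)).card) := (Nat.mul_add _ _ _).symm
    _ = L * F.card := by rw [hsplit]

theorem stmt3 (L r s : ℕ) (hs : 1 ≤ s) (hL : 2 * s + r + 1 ≤ L)
    (C : Finset (Fin L → ZMod 2)) (hC : IsPPRIC L s r ↑C)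
    (k : ℕ) (hk : k ≤ r + 1) :
    ((r : ℝ) + 3 - (k : ℝ)) / (1 - (s : ℝ) / (L : ℝ)) ^ k ≤ (C.card : ℝ) := by
  have hLpos : (0:ℝ) < L := by
    have : 0 < L := by omega
    exact_mod_cast this
  have hσ : (0:ℝ) < 1 - (s:ℝ)/L := by
    rw [sub_pos, div_lt_one hLpos]
    exact_mod_cast (by omega : s < L)
  have main : ∀ j, j ≤ r + 1 → ∃ P : Finset (Fin L), P.card = j ∧
      ((C.filter (fun c => ∀ i ∈ P, c i = 0)).card : ℝ)
        ≤ (1 - (s:ℝ)/L)^j * C.card := by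
    intro j
    induction j with
    | zero =>
      intro _
      refine ⟨∅, rfl, ?_⟩
      simp
    | succ n ih =>
      intro hn
      obtain ⟨P, hPcard, hPle⟩ := ih (by omega)
      obtain ⟨x, hxP, hstep⟩ := lemC hs hL C hC P (by omega)
      refine ⟨insert x P, by rw [Finset.card_insert_of_notMem hxP, hPcard], ?_⟩
      set m := (C.filter (fun c => ∀ i ∈ P, c i = 0)).card with hm
      set m' := (C.filter (fun c => ∀ i ∈ insert x P, c i = 0)).card with hm'
      have hR : (L:ℝ) * m' + s * m ≤ L * m := by exact_mod_cast hstep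
      have h2 : (m':ℝ) ≤ (1 - (s:ℝ)/L) * m := by
      
        have hL0 : (L:ℝ) ≠ 0 := ne_of_gt hLpos
        have h3 : (L:ℝ) * m' ≤ ((L:ℝ) - s) * m := by nlinarith
        calc (m':ℝ) = ((L:ℝ) * m') / L := by field_simp
          _ ≤ (((L:ℝ) - s) * m) / L := by gcongr
          _ = (1 - (s:ℝ)/L) * m := by field_simp
      calc (m':ℝ) ≤ (1 - (s:ℝ)/L) * m := h2
        _ ≤ (1 - (s:ℝ)/L) * ((1 - (s:ℝ)/L)^n * C.card) :=
            mul_le_mul_of_nonneg_left hPle (le_of_lt hσ)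
        _ = (1 - (s:ℝ)/L)^(n+1) * C.card := by ring
  obtain ⟨P, hPcard, hPle⟩ := main k hk
  have hB := lemB hs hL C hC P
  rw [hPcard] at hB
  have hB' : ((r:ℝ) + 3 - k) ≤ ((C.filter (fun c => ∀ i ∈ P, c i = 0)).card : ℝ) := by
    have : ((r:ℝ) + 3) ≤ ((C.filter (fun c => ∀ i ∈ P, c i = 0)).card : ℝ) + k := by
      exact_mod_cast hB
    linarith
  rw [div_le_iff₀ (pow_pos hσ k)]
  calc ((r:ℝ) + 3 - k) ≤ ((C.filter (fun c => ∀ i ∈ P, c i = 0)).card : ℝ) := hB'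
    _ ≤ (1 - (s:ℝ)/L)^k * C.card := hPle
    _ = (C.card : ℝ) * (1 - (s:ℝ)/L)^k := mul_comm _ _
end

section
/- Let r, s, L be nonnegative integers with s ≥ 1 and L ≥ 2s + r + 1. Then every (L,s,r) PPRIC code C satisfies |C| · binom(L−s, r+2) ≥ binom(L, r+2). -/
open Finset

lemma zmod2_ne_zero_eq : ∀ a b : ZMod 2, a ≠ 0 → b ≠ 0 → a = b := by decide

lemma zmod2_ne_zero_one : ∀ a : ZMod 2, a ≠ 0 → a = 1 := by decide

lemma count_supp (L k : ℕ) (T : Finset (Fin L)) :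
    (Finset.univ.filter (fun y : Fin L → ZMod 2 =>
      hammingNorm y = k ∧ Finset.univ.filter (fun i => y i ≠ 0) ⊆ T)).card
      = T.card.choose k := by
  classical
  rw [← Finset.card_powersetCard]
  refine Finset.card_bij' (fun y _ => Finset.univ.filter (fun i => y i ≠ 0))
    (fun S _ => fun i => if i ∈ S then 1 else 0) ?_ ?_ ?_ ?_
  · intro y hy
    simp only [mem_filter, mem_univ, true_and] at hy
    rw [Finset.mem_powersetCard]
    exact ⟨hy.2, hy.1⟩
  · intro S hS
    rw [Finset.mem_powersetCard] at hS
    simp only [mem_filter, mem_univ, true_and]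
    have hfil : (Finset.univ.filter (fun i => (if i ∈ S then (1:ZMod 2) else 0) ≠ 0)) = S := by
      ext i
      by_cases h : i ∈ S <;> simp [h]
    refine ⟨?_, ?_⟩
    · show (Finset.univ.filter (fun i => (if i ∈ S then (1:ZMod 2) else 0) ≠ 0)).card = k
      rw [hfil, hS.2]
    · rw [hfil]; exact hS.1
  · intro y hy
    funext i
    by_cases h : y i = 0 <;> simp [h, zmod2_ne_zero_one (y i)]
  · intro S hS
    ext i
    by_cases h : i ∈ S <;> simp [h]

theorem stmt6 (L r s : ℕ) (hs : 1 ≤ s) (hL : 2 * s + r + 1 ≤ L)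
    (C : Finset (Fin L → ZMod 2)) (hC : IsPPRIC L s r ↑C) :
    Nat.choose L (r + 2) ≤ C.card * Nat.choose (L - s) (r + 2) := by
  classical
  obtain ⟨hwt, hball⟩ := hC
  set k := r + 2 with hk
  set Y : Finset (Fin L → ZMod 2) :=
    Finset.univ.filter (fun y => hammingNorm y = k ∧
      Finset.univ.filter (fun i => y i ≠ 0) ⊆ (Finset.univ : Finset (Fin L))) with hYdef
  have hYcard : Y.card = Nat.choose L k := by
    rw [hYdef, count_supp, Finset.card_univ, Fintype.card_fin]
  set F : (Fin L → ZMod 2) → Finset (Fin L → ZMod 2) := fun c =>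
    Finset.univ.filter (fun y => hammingNorm y = k ∧
      Finset.univ.filter (fun i => y i ≠ 0) ⊆ (Finset.univ.filter (fun i => c i ≠ 0))ᶜ)
    with hFdef
  have key : Y ⊆ C.biUnion F := by
    intro y hy
    simp only [hYdef, mem_filter, mem_univ, true_and] at hy
    obtain ⟨hyk, -⟩ := hy
    have hy0 : y ∉ pball L 0 r := by
      simp only [pball, Set.mem_setOf_eq, hammingDist_zero_left, hyk]
      omega
    rw [hball] at hy0
    simp only [Set.mem_iInter, not_forall] at hy0
    obtain ⟨c, hcC, hcy⟩ := hy0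
    simp only [pball, Set.mem_setOf_eq, not_le] at hcy
    have hcC' : c ∈ C := hcC
    -- combinatorics
    set Sc := Finset.univ.filter (fun i => c i ≠ 0) with hSc
    set Sy := Finset.univ.filter (fun i => y i ≠ 0) with hSy
    set D := Finset.univ.filter (fun i => c i ≠ y i) with hD
    have hdcard : r + s + 1 ≤ D.card := hcy
    have hdisj : Disjoint D (Sc ∩ Sy) := by
      rw [Finset.disjoint_left]
      intro i hiD hiI
      simp only [hD, hSc, hSy, mem_filter, mem_inter, mem_univ, true_and] at hiD hiI
      exact hiD (zmod2_ne_zero_eq _ _ hiI.1 hiI.2)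
    have hsub : D ∪ (Sc ∩ Sy) ⊆ Sc ∪ Sy := by
      intro i hi
      simp only [hD, hSc, hSy, mem_union, mem_inter, mem_filter, mem_univ, true_and] at hi ⊢
      rcases hi with h | h
      · by_contra hcon
        push_neg at hcon
        rcases hcon with ⟨h1, h2⟩
        exact h (h1.trans h2.symm)
      · exact Or.inl h.1
    have h1 : D.card + (Sc ∩ Sy).card ≤ (Sc ∪ Sy).card := by
      rw [← Finset.card_union_of_disjoint hdisj]
      exact Finset.card_le_card hsub
    have h2 : (Sc ∪ Sy).card + (Sc ∩ Sy).card = Sc.card + Sy.card :=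
      Finset.card_union_add_card_inter Sc Sy
    have hScc : Sc.card = s := hwt c hcC'
    have hSyc : Sy.card = k := hyk
    have hIzero : (Sc ∩ Sy).card = 0 := by omega
    have hdisj2 : Sy ⊆ Scᶜ := by
      rw [Finset.card_eq_zero] at hIzero
      intro i hi
      rw [Finset.mem_compl]
      intro hiSc
      exact Finset.notMem_empty i (hIzero ▸ Finset.mem_inter.2 ⟨hiSc, hi⟩)
    rw [Finset.mem_biUnion]
    exact ⟨c, hcC', by simp only [hFdef, mem_filter, mem_univ, true_and]; exact ⟨hyk, hdisj2⟩⟩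
  have hFcard : ∀ c ∈ C, (F c).card = Nat.choose (L - s) k := by
    intro c hc
    have hcs : (Finset.univ.filter (fun i => c i ≠ 0)).card = s := hwt c hc
    have h := count_supp L k (Finset.univ.filter (fun i => c i ≠ 0))ᶜ
    rw [Finset.card_compl, hcs, Fintype.card_fin] at h
    exact h
  calc Nat.choose L k = Y.card := hYcard.symm
    _ ≤ (C.biUnion F).card := Finset.card_le_card key
    _ ≤ ∑ c ∈ C, (F c).card := Finset.card_biUnion_le
    _ = ∑ c ∈ C, Nat.choose (L - s) k := Finset.sum_congr rfl hFcard
    _ = C.card * Nat.choose (L - s) k := by rw [Finset.sum_const, smul_eq_mul]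
end

section
/- Let r, s, L be nonnegative integers with s ≥ 1, L ≥ 2s + r + 1 and L ≥ (r+3)s. Then there exists an (L,s,r) PPRIC code C with exactly r + 3 codewords; in fact any collection of r + 3 vectors of weight s with pairwise disjoint supports is such a code. -/
open Finset

private lemma zmod2_ne_iff : ∀ a b : ZMod 2,
    a ≠ b ↔ (a ≠ 0 ∧ b = 0) ∨ (a = 0 ∧ b ≠ 0) := by decide

private lemma key_dist (L s r : ℕ) (c y : Fin L → ZMod 2)
    (hwt : hammingNorm c = s) (hd : hammingDist c y ≤ r + s) :
    (Finset.univ.filter fun i => y i ≠ 0).card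
      ≤ r + 2 * ((Finset.univ.filter fun i => y i ≠ 0) ∩ (Finset.univ.filter fun i => c i ≠ 0)).card := by
  set S : Finset (Fin L) := Finset.univ.filter fun i => y i ≠ 0 with hS
  set T : Finset (Fin L) := Finset.univ.filter fun i => c i ≠ 0 with hT
  have hsplit : (Finset.univ.filter fun i => c i ≠ y i) = (T \ S) ∪ (S \ T) := by
    ext i
    simp only [hS, hT, mem_filter, mem_union, mem_sdiff, mem_univ, true_and]
    rw [zmod2_ne_iff (c i) (y i)]
    tauto
  have hdisj : Disjoint (T \ S) (S \ T) := disjoint_sdiff_sdiff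
  have hd' : (T \ S).card + (S \ T).card ≤ r + s := by
    rw [← card_union_of_disjoint hdisj, ← hsplit]
    exact hd
  have h1 : (S \ T).card + (S ∩ T).card = S.card := card_sdiff_add_card_inter S T
  have h2 : (T \ S).card + (T ∩ S).card = T.card := card_sdiff_add_card_inter T S
  have h3 : (T ∩ S).card = (S ∩ T).card := by rw [inter_comm]
  have h4 : T.card = s := hwt
  omega

private lemma main_pric (L s r : ℕ) (hs : 1 ≤ s)
    (C : Finset (Fin L → ZMod 2)) (hcard : C.card = r + 3)
    (hwt : ∀ c ∈ C, hammingNorm c = s)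
    (hdisj : ∀ c ∈ C, ∀ c' ∈ C, c ≠ c' → ∀ i : Fin L, c i = 0 ∨ c' i = 0) :
    IsPPRIC L s r ↑C := by
  refine ⟨fun c hc => hwt c hc, ?_⟩
  ext y
  simp only [pball, Set.mem_setOf_eq, Set.mem_iInter, Finset.mem_coe]
  constructor
  · intro hy c hc
    calc hammingDist c y ≤ hammingDist c 0 + hammingDist 0 y := hammingDist_triangle c 0 y
      _ ≤ s + r := by
        have h1 : hammingDist c 0 = s := by rw [hammingDist_zero_right]; exact hwt c hc
        have h2 : hammingDist 0 y ≤ r := hy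
        omega
      _ = r + s := by omega
  · intro h
    by_contra hyr
    push_neg at hyr
    rw [hammingDist_zero_left] at hyr
    set S : Finset (Fin L) := Finset.univ.filter fun i => y i ≠ 0 with hSdef
    have hSn : S.card = hammingNorm y := rfl
    set a : (Fin L → ZMod 2) → ℕ := fun c => (S ∩ (Finset.univ.filter fun i => c i ≠ 0)).card with ha
    have h1 : ∀ c ∈ C, S.card ≤ r + 2 * a c := fun c hc =>
      key_dist L s r c y (hwt c hc) (h c hc)
    -- sum of a over C is at most S.card
    have hpd : ∀ c ∈ C, ∀ c' ∈ C, c ≠ c' →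
        Disjoint (S ∩ (Finset.univ.filter fun i => c i ≠ 0)) (S ∩ (Finset.univ.filter fun i => c' i ≠ 0)) := by
      intro c hc c' hc' hne
      rw [Finset.disjoint_left]
      intro i hi hi'
      simp only [mem_inter, mem_filter, mem_univ, true_and] at hi hi'
      rcases hdisj c hc c' hc' hne i with h0 | h0
      · exact hi.2 h0
      · exact hi'.2 h0
    have hsum : ∑ c ∈ C, a c ≤ S.card := by
      rw [← Finset.card_biUnion hpd]
      apply Finset.card_le_card
      intro i hi
      simp only [Finset.mem_biUnion] at hi
      obtain ⟨c, _, hic⟩ := hi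
      exact (mem_inter.mp hic).1
    have hone : ∀ c ∈ C, 1 ≤ a c := by
      intro c hc
      have := h1 c hc
      omega
    have hsum1 : C.card * 1 ≤ ∑ c ∈ C, a c := by
      simpa using Finset.card_nsmul_le_sum C a 1 hone
    have hsum2 : C.card * S.card ≤ C.card * r + 2 * ∑ c ∈ C, a c := by
      calc C.card * S.card = ∑ _c ∈ C, S.card := by rw [Finset.sum_const, smul_eq_mul]
        _ ≤ ∑ c ∈ C, (r + 2 * a c) := Finset.sum_le_sum h1
        _ = C.card * r + 2 * ∑ c ∈ C, a c := by
            rw [Finset.sum_add_distrib, Finset.sum_const, smul_eq_mul, ← Finset.mul_sum]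
    set m := ∑ c ∈ C, a c
    set n := S.card
    rw [hcard] at hsum1 hsum2
    have hn : r + 1 ≤ n := by omega
    nlinarith [hsum, hsum1, hsum2, hn]

theorem stmt8 (L r s : ℕ) (hs : 1 ≤ s) (hL1 : 2 * s + r + 1 ≤ L)
    (hL2 : (r + 3) * s ≤ L) :
    (∃ C : Finset (Fin L → ZMod 2), C.card = r + 3 ∧ IsPPRIC L s r ↑C) ∧
    (∀ C : Finset (Fin L → ZMod 2), C.card = r + 3 →
      (∀ c ∈ C, hammingNorm c = s) →
      (∀ c ∈ C, ∀ c' ∈ C, c ≠ c' → ∀ i : Fin L, c i = 0 ∨ c' i = 0) →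
      IsPPRIC L s r ↑C) := by
  have main := main_pric L s r hs
  constructor
  · -- construct explicit code
    set e : ℕ → (Fin L → ZMod 2) :=
      fun j i => if j * s ≤ i.val ∧ i.val < j * s + s then 1 else 0 with he
    -- supports are intervals
    have hsupp : ∀ j i, e j i ≠ 0 ↔ (j * s ≤ i.val ∧ i.val < j * s + s) := by
      intro j i
      simp only [he]
      split
      · simp_all
      · simp_all
    have hdisjj : ∀ j j', j ≠ j' → ∀ i : Fin L, e j i = 0 ∨ e j' i = 0 := by
      intro j j' hne i
      by_contra hcon
      push_neg at hcon
      have h1 := (hsupp j i).mp hcon.1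
      have h2 := (hsupp j' i).mp hcon.2
      rcases Nat.lt_or_ge j j' with hlt | hge
      · have : (j + 1) * s ≤ j' * s := Nat.mul_le_mul_right s hlt
        have : j * s + s ≤ j' * s := by rw [Nat.add_mul, one_mul] at this; omega
        omega
      · have hlt' : j' < j := by omega
        have : (j' + 1) * s ≤ j * s := Nat.mul_le_mul_right s hlt'
        have : j' * s + s ≤ j * s := by rw [Nat.add_mul, one_mul] at this; omega
        omega
    have hwtj : ∀ j < r + 3, hammingNorm (e j) = s := by
      intro j hj
      have hub : j * s + s ≤ L := by
        calc j * s + s = (j + 1) * s := by ring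
          _ ≤ (r + 3) * s := Nat.mul_le_mul_right s (by omega)
          _ ≤ L := hL2
      have : ({i | e j i ≠ 0} : Finset (Fin L)).map Fin.valEmbedding
          = Finset.Ico (j * s) (j * s + s) := by
        ext n
        simp only [Finset.mem_map, Finset.mem_Ico, Fin.valEmbedding_apply, mem_filter,
          mem_univ, true_and]
        constructor
        · rintro ⟨i, hi, rfl⟩
          exact (hsupp j i).mp hi
        · intro hn
          refine ⟨⟨n, by omega⟩, ?_, rfl⟩
          exact (hsupp j ⟨n, by omega⟩).mpr hn
      have := congrArg Finset.card this
      rw [Finset.card_map, Nat.card_Ico] at this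
      simpa [hammingNorm] using this
    have hinj : Set.InjOn e (Finset.range (r + 3)) := by
      intro j hj j' hj' heq
      by_contra hne
      simp only [Finset.coe_range, Set.mem_Iio] at hj hj'
      have hub : j * s + s ≤ L := by
        calc j * s + s = (j + 1) * s := by ring
          _ ≤ (r + 3) * s := Nat.mul_le_mul_right s (by omega)
          _ ≤ L := hL2
      set i : Fin L := ⟨j * s, by omega⟩
      have hiv : (i : ℕ) = j * s := rfl
      have h1 : e j i ≠ 0 := (hsupp j i).mpr (by rw [hiv]; omega)
      rcases hdisjj j j' hne i with h0 | h0
      · exact h1 h0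
      · rw [heq] at h1; exact h1 h0
    refine ⟨(Finset.range (r + 3)).image e, ?_, ?_⟩
    · rw [Finset.card_image_of_injOn hinj, Finset.card_range]
    · apply main
      · rw [Finset.card_image_of_injOn hinj, Finset.card_range]
      · intro c hc
        simp only [Finset.mem_image, Finset.mem_range] at hc
        obtain ⟨j, hj, rfl⟩ := hc
        exact hwtj j hj
      · intro c hc c' hc' hne i
        simp only [Finset.mem_image, Finset.mem_range] at hc hc'
        obtain ⟨j, hj, rfl⟩ := hc
        obtain ⟨j', hj', rfl⟩ := hc'
        exact hdisjj j j' (fun h => hne (by rw [h])) i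
  · intro C hcard hwt hdisj
    exact main C hcard hwt hdisj
end

section
/- Let r, s, L be nonnegative integers with s ≥ 1, L ≥ 2s + r + 1 and L ≥ (r+3)s. Then the minimum possible number of codewords of an (L,s,r) PPRIC code equals r + 3; that is, there exists an (L,s,r) PPRIC code of size r + 3, and every (L,s,r) PPRIC code has size at least r + 3. -/
open Finset

namespace PPRICaux

/-- indicator vector of a finset -/
def ind (L : ℕ) (A : Finset (Fin L)) : Fin L → ZMod 2 := fun i => if i ∈ A then 1 else 0

variable {L : ℕ}

lemma zmod2_cases : ∀ a : ZMod 2, a = 0 ∨ a = 1 := by decide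

/-- support of a word -/
def supp (x : Fin L → ZMod 2) : Finset (Fin L) := {i | x i ≠ 0}

lemma ind_supp (x : Fin L → ZMod 2) : ind L (supp x) = x := by
  funext i
  simp only [ind, supp, mem_filter, mem_univ, true_and]
  rcases zmod2_cases (x i) with h | h <;> simp [h]

lemma norm_ind (A : Finset (Fin L)) : hammingNorm (ind L A) = A.card := by
  unfold hammingNorm
  congr 1
  ext i
  simp only [mem_filter, mem_univ, true_and, ind]
  by_cases h : i ∈ A <;> simp [h]

lemma mem_supp {x : Fin L → ZMod 2} {i : Fin L} : i ∈ supp x ↔ x i ≠ 0 := by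
  simp [supp]

lemma card_supp (x : Fin L → ZMod 2) : (supp x).card = hammingNorm x := rfl

/-- key identity -/
lemma dist_ind (A B : Finset (Fin L)) :
    hammingDist (ind L A) (ind L B) + 2 * (A ∩ B).card = A.card + B.card := by
  have h1 : hammingDist (ind L A) (ind L B) = (A \ B).card + (B \ A).card := by
    unfold hammingDist
    rw [← card_union_of_disjoint (disjoint_sdiff_sdiff)]
    congr 1
    ext i
    rw [Finset.mem_filter]
    simp only [mem_filter, mem_univ, true_and, mem_union, mem_sdiff, ind]
    by_cases hA : i ∈ A <;> by_cases hB : i ∈ B <;> simp [hA, hB]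
  have h2 : (A \ B).card + (A ∩ B).card = A.card := by
    rw [add_comm, card_inter_add_card_sdiff]
  have h3 : (B \ A).card + (B ∩ A).card = B.card := by
    rw [add_comm, card_inter_add_card_sdiff]
  have h4 : (B ∩ A).card = (A ∩ B).card := by rw [inter_comm]
  omega

lemma dist_to_ind (c y : Fin L → ZMod 2) :
    hammingDist c y + 2 * (supp c ∩ supp y).card = hammingNorm c + hammingNorm y := by
  have := dist_ind (supp c) (supp y)
  rwa [ind_supp, ind_supp, card_supp, card_supp] at this

end PPRICaux

open PPRICaux

theorem stmt9 (L r s : ℕ) (hs : 1 ≤ s) (hL1 : 2 * s + r + 1 ≤ L)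
    (hL2 : (r + 3) * s ≤ L) :
    (∃ C : Finset (Fin L → ZMod 2), IsPPRIC L s r ↑C ∧ C.card = r + 3) ∧
    (∀ C : Finset (Fin L → ZMod 2), IsPPRIC L s r ↑C → r + 3 ≤ C.card) := by
  have hcardL : Fintype.card (Fin L) = L := Fintype.card_fin L
  constructor
  · -- Existence: blocks of size s with disjoint supports
    -- block j : coordinates j*s .. j*s+s-1
    have hblk : ∀ j : ℕ, j < r + 3 → ∀ m ∈ Finset.Ico (j*s) (j*s+s), m < L := by
      intro j hj m hm
      rw [Finset.mem_Ico] at hm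
      have : j*s + s ≤ (r+3)*s := by
        have : (j+1)*s ≤ (r+3)*s := Nat.mul_le_mul_right s hj
        nlinarith
      omega
    set B : ℕ → Finset (Fin L) := fun j =>
      if h : j < r + 3 then (Finset.Ico (j*s) (j*s+s)).attachFin (hblk j h) else ∅ with hB
    have hBcard : ∀ j < r + 3, (B j).card = s := by
      intro j hj
      simp only [hB, dif_pos hj, Finset.card_attachFin, Nat.card_Ico]
      omega
    have hBmem : ∀ j (hj : j < r + 3) (i : Fin L), i ∈ B j ↔ j*s ≤ i.val ∧ i.val < j*s + s := by
      intro j hj i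
      simp [hB, dif_pos hj, Finset.mem_attachFin, Finset.mem_Ico]
    have hBdisj : ∀ j k, j < r + 3 → k < r + 3 → j ≠ k → Disjoint (B j) (B k) := by
      intro j k hj hk hjk
      rw [Finset.disjoint_left]
      intro i hij hik
      rw [hBmem j hj] at hij
      rw [hBmem k hk] at hik
      rcases Nat.lt_or_ge j k with h | h
      · have : j*s + s ≤ k*s := by nlinarith
        omega
      · have : k < j := by omega
        have : k*s + s ≤ j*s := by nlinarith
        omega
    set C : Finset (Fin L → ZMod 2) :=
      (Finset.range (r+3)).image (fun j => ind L (B j)) with hC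
    have hwt : ∀ c ∈ C, hammingNorm c = s := by
      intro c hc
      rw [hC, Finset.mem_image] at hc
      obtain ⟨j, hj, rfl⟩ := hc
      rw [Finset.mem_range] at hj
      rw [norm_ind, hBcard j hj]
    refine ⟨C, ⟨hwt, ?_⟩, ?_⟩
    · ext y
      simp only [pball, Set.mem_setOf_eq, Set.mem_iInter]
      constructor
      · intro hy c hc
        show hammingDist c y ≤ r + s
        have h1 : hammingDist c y ≤ hammingDist c 0 + hammingDist 0 y :=
          hammingDist_triangle _ _ _
        rw [hammingDist_zero_right, hammingDist_zero_left] at h1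
        rw [hammingDist_zero_left] at hy
        have := hwt c hc
        omega
      · intro hy
        by_contra hw
        rw [hammingDist_zero_left] at hw
        push_neg at hw
        set w := hammingNorm y with hwdef
        have hw1 : r + 1 ≤ w := hw
        -- find a block with small intersection
        set q := w / (r + 3) with hq
        have hjex : ∃ j < r + 3, ((supp y) ∩ B j).card ≤ q := by
          by_contra hcon
          push_neg at hcon
          have hsum : ∑ j ∈ Finset.range (r+3), ((supp y) ∩ B j).card ≤ (supp y).card := by
            rw [← Finset.card_biUnion]
            · apply Finset.card_le_card
              intro i hi
              rw [Finset.mem_biUnion] at hi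
              obtain ⟨j, _, hij⟩ := hi
              exact (Finset.mem_inter.mp hij).1
            · intro j hj k hk hjk
              rw [Finset.mem_coe, Finset.mem_range] at hj hk
              exact Finset.disjoint_of_subset_left (Finset.inter_subset_right)
                (Finset.disjoint_of_subset_right (Finset.inter_subset_right)
                  (hBdisj j k hj hk hjk))
          have hlow : (r + 3) * (q + 1) ≤ ∑ j ∈ Finset.range (r+3), ((supp y) ∩ B j).card := by
            calc (r + 3) * (q + 1) = ∑ _j ∈ Finset.range (r+3), (q+1) := by
                  rw [Finset.sum_const, Finset.card_range]; ring
              _ ≤ _ := Finset.sum_le_sum (fun j hj => hcon j (Finset.mem_range.mp hj))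
          rw [card_supp] at hsum
          have : w < (r + 3) * (q + 1) := Nat.lt_mul_div_succ w (by omega)
          omega
        obtain ⟨j, hj, hjq⟩ := hjex
        have hdle := hy (ind L (B j))
          (Finset.mem_coe.mpr (Finset.mem_image.mpr ⟨j, Finset.mem_range.mpr hj, rfl⟩))
        change hammingDist (ind L (B j)) y ≤ r + s at hdle
        have hkey := dist_ind (B j) (supp y)
        rw [ind_supp] at hkey
        rw [hBcard j hj, card_supp, ← hwdef] at hkey
        -- hammingDist (ind (B j)) y + 2*|B j ∩ supp y| = s + w
        have hqw : 2 * q + r + 1 ≤ w := by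
          rcases Nat.lt_or_ge w (r + 3) with h | h
          · have : q = 0 := Nat.div_eq_of_lt h
            omega
          · have hq1 : 1 ≤ q := Nat.one_le_div_iff (by omega) |>.mpr h
            have hmul : q * (r + 3) ≤ w := Nat.div_mul_le_self w (r+3)
            nlinarith
        have hBsupp : (B j ∩ supp y).card ≤ q := by
          rwa [inter_comm] at hjq
        omega
    · rw [hC, Finset.card_image_of_injOn, Finset.card_range]
      intro j hj k hk hjk
      rw [Finset.mem_coe, Finset.mem_range] at hj hk
      by_contra hne
      have hd := hBdisj j k hj hk hne
      have hjs : (B j).Nonempty := Finset.card_pos.mp (by rw [hBcard j hj]; omega)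
      obtain ⟨i, hi⟩ := hjs
      have h1 : ind L (B j) i = 1 := by simp [ind, hi]
      have h2 : ind L (B k) i = 0 := by
        have : i ∉ B k := Finset.disjoint_left.mp hd hi
        simp [ind, this]
      have hci := congrFun hjk i
      simp only at hci
      rw [h1, h2] at hci
      exact one_ne_zero hci
  · -- Lower bound
    intro C ⟨hwt, hball⟩
    by_contra hlt
    push_neg at hlt
    have hCcard : C.card ≤ r + 2 := by omega
    -- pick one support element per codeword
    classical
    set f : (Fin L → ZMod 2) → Fin L := fun c =>
      if h : (supp c).Nonempty then h.choose else ⟨0, by omega⟩ with hf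
    set T : Finset (Fin L) := C.image f with hT
    have hTcard : T.card ≤ r + 2 := le_trans (Finset.card_image_le) hCcard
    obtain ⟨Y, hTY, hYcard⟩ := Finset.exists_superset_card_eq hTcard (by omega : r + 2 ≤ Fintype.card (Fin L))
    set y := ind L Y with hy
    have hyn : hammingNorm y = r + 2 := by rw [hy, norm_ind, hYcard]
    have hymem : y ∈ ⋂ c ∈ (C : Set (Fin L → ZMod 2)), pball L c (r + s) := by
      simp only [Set.mem_iInter]
      intro c hc
      simp only [pball, Set.mem_setOf_eq]
      have hcs : hammingNorm c = s := hwt c hc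
      have hsupp : (supp c).Nonempty := by
        rw [← Finset.card_pos, card_supp, hcs]; omega
      have hfc : f c ∈ supp c := by
        rw [hf]; simp only [dif_pos hsupp]; exact hsupp.choose_spec
      have hfcY : f c ∈ Y := hTY (Finset.mem_image_of_mem f hc)
      have hint : 1 ≤ (supp c ∩ supp y).card := by
        apply Finset.card_pos.mpr
        refine ⟨f c, Finset.mem_inter.mpr ⟨hfc, ?_⟩⟩
        rw [mem_supp, hy]
        simp [ind, hfcY]
      have hkey := dist_to_ind c y
      rw [hcs, hyn] at hkey
      omega
    rw [← hball] at hymem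
    simp only [pball, Set.mem_setOf_eq, hammingDist_zero_left] at hymem
    omega
end

section
/- Let s, L₁, L₂, t₁, t₂ be integers with L₁ > L₁ − s > t₁ > 0 and L₂ > L₂ − s > t₂ > 0. If S₁ is an (L₁, L₁−s, t₁) covering design and S₂ is an (L₂, L₂−s, t₂) covering design, then there exists an (L₁ + L₂, s, t₁ + t₂ − 1) PPRIC code with at most |S₁| + |S₂| codewords. -/
/-- `S` is an `(n,k,t)` covering design: a collection of `k`-element blocks of an
`n`-set such that every `t`-element subset is contained in at least one block. -/
def IsCoveringDesign (n k t : ℕ) (S : Finset (Finset (Fin n))) : Prop :=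
  (∀ B ∈ S, B.card = k) ∧
  ∀ T : Finset (Fin n), T.card = t → ∃ B ∈ S, T ⊆ B

namespace PPRICaux

open Finset
open scoped symmDiff

variable {n m : ℕ}

/-- embedding of the first block of coordinates -/
def emb1 (L1 L2 : ℕ) : Fin L1 ↪ Fin (L1 + L2) := ⟨Fin.castAdd L2, Fin.castAdd_injective L1 L2⟩

/-- embedding of the second block of coordinates -/
def emb2 (L1 L2 : ℕ) : Fin L2 ↪ Fin (L1 + L2) :=
  ⟨Fin.natAdd L1, fun a b hab => by simpa [Fin.ext_iff] using hab⟩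

lemma emb1_val (L1 L2 : ℕ) (a : Fin L1) : ((emb1 L1 L2 a : Fin (L1 + L2)) : ℕ) = a := rfl

lemma emb2_val (L1 L2 : ℕ) (a : Fin L2) : ((emb2 L1 L2 a : Fin (L1 + L2)) : ℕ) = L1 + a := rfl

/-- the indicator vector of a finset -/
def vec (A : Finset (Fin n)) : Fin n → ZMod 2 := fun i => if i ∈ A then 1 else 0

/-- the support of a vector, as a finset -/
def suppF (y : Fin n → ZMod 2) : Finset (Fin n) := univ.filter fun i => y i ≠ 0

lemma card_suppF (y : Fin n → ZMod 2) : (suppF y).card = hammingNorm y := rfl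

lemma vec_norm (A : Finset (Fin n)) : hammingNorm (vec A) = A.card := by
  have h : (univ.filter fun i => vec A i ≠ 0) = A := by
    ext i
    by_cases hi : i ∈ A <;> simp [vec, hi]
  simpa [hammingNorm] using congrArg Finset.card h

lemma vec_dist (A : Finset (Fin n)) (y : Fin n → ZMod 2) :
    hammingDist (vec A) y = (A ∆ suppF y).card := by
  have h : (univ.filter fun i => vec A i ≠ y i) = A ∆ suppF y := by
    ext i
    rw [Finset.mem_filter]
    rcases (by decide : ∀ a : ZMod 2, a = 0 ∨ a = 1) (y i) with h | h <;>
      by_cases hi : i ∈ A <;>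
      simp [vec, hi, h, suppF, Finset.mem_symmDiff]
  simpa [hammingDist] using congrArg Finset.card h

lemma card_symmDiff (A S : Finset (Fin n)) :
    (A ∆ S).card + 2 * (A ∩ S).card = A.card + S.card := by
  have h1 : A ∆ S = (A \ S) ∪ (S \ A) := by
    rw [symmDiff_def]; rfl
  have hd : Disjoint (A \ S) (S \ A) := disjoint_sdiff_sdiff
  have h2 := Finset.card_sdiff_add_card_inter A S
  have h3 := Finset.card_sdiff_add_card_inter S A
  rw [inter_comm] at h3
  rw [h1, Finset.card_union_of_disjoint hd]
  omega

lemma map_inter_supp (e : Fin m ↪ Fin n) (B : Finset (Fin m)) (y : Fin n → ZMod 2) :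
    (B.map e ∩ suppF y) = (B ∩ suppF fun j => y (e j)).map e := by
  ext i
  simp only [Finset.mem_inter, Finset.mem_map, suppF, Finset.mem_filter, Finset.mem_univ,
    true_and]
  constructor
  · rintro ⟨⟨a, ha, rfl⟩, hy⟩
    exact ⟨a, ⟨ha, hy⟩, rfl⟩
  · rintro ⟨a, ⟨ha, hy⟩, rfl⟩
    exact ⟨⟨a, ha, rfl⟩, hy⟩

/-- covering design helper: a block whose complement misses most of `P`. -/
lemma cover_bound {L s t : ℕ} (ht : t ≤ L) {S : Finset (Finset (Fin L))}
    (hS : IsCoveringDesign L (L - s) t S) (P : Finset (Fin L)) :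
    ∃ B ∈ S, (Bᶜ ∩ P).card + min t P.card ≤ P.card := by
  rcases le_total t P.card with h | h
  · obtain ⟨T, hTP, hT⟩ := Finset.exists_subset_card_eq h
    obtain ⟨B, hB, hTB⟩ := hS.2 T hT
    refine ⟨B, hB, ?_⟩
    have h1 : (P \ B).card + (P ∩ B).card = P.card := Finset.card_sdiff_add_card_inter P B
    have h3 : t ≤ (P ∩ B).card := hT ▸ Finset.card_le_card (Finset.subset_inter hTP hTB)
    have h4 : Bᶜ ∩ P = P \ B := by
      ext i
      simp only [Finset.mem_inter, Finset.mem_compl, Finset.mem_sdiff]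
      tauto
    rw [h4, min_eq_left h]
    omega
  · obtain ⟨T, hPT, _, hT⟩ := Finset.exists_subsuperset_card_eq (Finset.subset_univ P) h
      (by simpa using ht)
    obtain ⟨B, hB, hTB⟩ := hS.2 T hT
    refine ⟨B, hB, ?_⟩
    have h0 : Bᶜ ∩ P = ∅ := by
      ext i
      simp only [Finset.mem_inter, Finset.mem_compl, Finset.notMem_empty, iff_false, not_and]
      intro hiB hiP
      exact hiB (hTB (hPT hiP))
    rw [h0, min_eq_right h]
    simp

end PPRICaux

open PPRICaux Finset

theorem stmt11 (s L1 L2 t1 t2 : ℕ)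
    (h1a : L1 - s < L1) (h1b : t1 < L1 - s) (h1c : 0 < t1)
    (h2a : L2 - s < L2) (h2b : t2 < L2 - s) (h2c : 0 < t2)
    (S1 : Finset (Finset (Fin L1))) (hS1 : IsCoveringDesign L1 (L1 - s) t1 S1)
    (S2 : Finset (Finset (Fin L2))) (hS2 : IsCoveringDesign L2 (L2 - s) t2 S2) :
    ∃ C : Finset (Fin (L1 + L2) → ZMod 2),
      IsPPRIC (L1 + L2) s (t1 + t2 - 1) ↑C ∧ C.card ≤ S1.card + S2.card := by
  have hs1 : s < L1 := by omega
  have hs2 : s < L2 := by omega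
  have ht1 : t1 ≤ L1 := by omega
  have ht2 : t2 ≤ L2 := by omega
  let C : Finset (Fin (L1 + L2) → ZMod 2) :=
    S1.image (fun B => vec ((Bᶜ).map (emb1 L1 L2))) ∪ S2.image (fun B => vec ((Bᶜ).map (emb2 L1 L2)))
  have hnorm : ∀ c ∈ (↑C : Set (Fin (L1 + L2) → ZMod 2)), hammingNorm c = s := by
    intro c hc
    rw [Finset.mem_coe, Finset.mem_union] at hc
    rcases hc with hc | hc
    · obtain ⟨B, hB, rfl⟩ := Finset.mem_image.1 hc
      rw [vec_norm, Finset.card_map, Finset.card_compl, Fintype.card_fin, hS1.1 B hB]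
      omega
    · obtain ⟨B, hB, rfl⟩ := Finset.mem_image.1 hc
      rw [vec_norm, Finset.card_map, Finset.card_compl, Fintype.card_fin, hS2.1 B hB]
      omega
  -- support splitting
  have hsplit : ∀ y : Fin (L1 + L2) → ZMod 2,
      (suppF y).card = (suppF fun j => y ((emb1 L1 L2) j)).card + (suppF fun j => y ((emb2 L1 L2) j)).card := by
    intro y
    have hU : suppF y = ((suppF fun j => y ((emb1 L1 L2) j)).map (emb1 L1 L2)) ∪ ((suppF fun j => y ((emb2 L1 L2) j)).map (emb2 L1 L2)) := by
      ext i
      simp only [suppF, Finset.mem_union, Finset.mem_map, Finset.mem_filter, Finset.mem_univ,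
        true_and]
      induction i using Fin.addCases with
      | left a =>
        constructor
        · intro h
          exact Or.inl ⟨a, h, rfl⟩
        · rintro (⟨b, hb, hba⟩ | ⟨b, hb, hba⟩)
          · obtain rfl : b = a := Fin.castAdd_injective L1 L2 hba
            exact hb
          · exfalso
            have hval := congrArg Fin.val hba
            rw [emb2_val] at hval
            simp only [Fin.coe_castAdd] at hval
            omega
      | right a =>
        constructor
        · intro h
          exact Or.inr ⟨a, h, rfl⟩
        · rintro (⟨b, hb, hba⟩ | ⟨b, hb, hba⟩)
          · exfalso
            have hval := congrArg Fin.val hba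
            rw [emb1_val] at hval
            simp only [Fin.coe_natAdd] at hval
            omega
          · have hval := congrArg Fin.val hba
            rw [emb2_val] at hval
            simp only [Fin.coe_natAdd] at hval
            obtain rfl : b = a := Fin.ext (by omega)
            exact hb
    have hd : Disjoint ((suppF fun j => y ((emb1 L1 L2) j)).map (emb1 L1 L2)) ((suppF fun j => y ((emb2 L1 L2) j)).map (emb2 L1 L2)) := by
      rw [Finset.disjoint_left]
      rintro i hi1 hi2
      obtain ⟨a, _, rfl⟩ := Finset.mem_map.1 hi1
      obtain ⟨b, _, hba⟩ := Finset.mem_map.1 hi2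
      have : (Fin.natAdd L1 b : ℕ) = (Fin.castAdd L2 a : ℕ) := by
        show (((emb2 L1 L2) b : Fin (L1 + L2)) : ℕ) = _
        rw [hba]; rfl
      simp only [Fin.coe_natAdd, Fin.coe_castAdd] at this
      omega
    rw [hU, Finset.card_union_of_disjoint hd, Finset.card_map, Finset.card_map]
  refine ⟨C, ⟨hnorm, ?_⟩, ?_⟩
  · -- ball equality
    ext y
    simp only [pball, Set.mem_setOf_eq, Set.mem_iInter]
    have h0y : hammingDist (0 : Fin (L1 + L2) → ZMod 2) y = hammingNorm y := by
      rw [hammingDist_comm, hammingDist_zero_right]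
    rw [h0y]
    constructor
    · intro hy c hcC
      have htri := hammingDist_triangle c 0 y
      rw [hammingDist_zero_right, h0y] at htri
      have hcs : hammingNorm c = s := hnorm c hcC
      omega
    · intro h
      by_contra hw
      push_neg at hw
      -- hw : t1 + t2 - 1 < hammingNorm y
      have hww := hsplit y
      rw [card_suppF] at hww
      by_cases hside : (suppF fun j => y ((emb1 L1 L2) j)).card + t2 ≤ (suppF fun j => y ((emb2 L1 L2) j)).card + t1
      · obtain ⟨B, hB, hk⟩ := cover_bound ht1 hS1 (suppF fun j => y ((emb1 L1 L2) j))
        have hcC : vec ((Bᶜ).map (emb1 L1 L2)) ∈ (↑C : Set (Fin (L1 + L2) → ZMod 2)) := by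
          rw [Finset.mem_coe, Finset.mem_union]
          exact Or.inl (Finset.mem_image.2 ⟨B, hB, rfl⟩)
        have hle := h _ hcC
        rw [vec_dist] at hle
        have hsd := card_symmDiff ((Bᶜ).map (emb1 L1 L2)) (suppF y)
        have hint : (((Bᶜ).map (emb1 L1 L2)) ∩ suppF y).card = (Bᶜ ∩ suppF fun j => y ((emb1 L1 L2) j)).card := by
          rw [map_inter_supp, Finset.card_map]
        have hcard : ((Bᶜ).map (emb1 L1 L2)).card = s := by
          rw [Finset.card_map, Finset.card_compl, Fintype.card_fin, hS1.1 B hB]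
          omega
        rw [hint, hcard, card_suppF] at hsd
        rcases le_total t1 (suppF fun j => y ((emb1 L1 L2) j)).card with hmin | hmin
        · rw [min_eq_left hmin] at hk
          omega
        · rw [min_eq_right hmin] at hk
          omega
      · push_neg at hside
        obtain ⟨B, hB, hk⟩ := cover_bound ht2 hS2 (suppF fun j => y ((emb2 L1 L2) j))
        have hcC : vec ((Bᶜ).map (emb2 L1 L2)) ∈ (↑C : Set (Fin (L1 + L2) → ZMod 2)) := by
          rw [Finset.mem_coe, Finset.mem_union]
          exact Or.inr (Finset.mem_image.2 ⟨B, hB, rfl⟩)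
        have hle := h _ hcC
        rw [vec_dist] at hle
        have hsd := card_symmDiff ((Bᶜ).map (emb2 L1 L2)) (suppF y)
        have hint : (((Bᶜ).map (emb2 L1 L2)) ∩ suppF y).card = (Bᶜ ∩ suppF fun j => y ((emb2 L1 L2) j)).card := by
          rw [map_inter_supp, Finset.card_map]
        have hcard : ((Bᶜ).map (emb2 L1 L2)).card = s := by
          rw [Finset.card_map, Finset.card_compl, Fintype.card_fin, hS2.1 B hB]
          omega
        rw [hint, hcard, card_suppF] at hsd
        rcases le_total t2 (suppF fun j => y ((emb2 L1 L2) j)).card with hmin | hmin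
        · rw [min_eq_left hmin] at hk
          omega
        · rw [min_eq_right hmin] at hk
          omega
  · exact le_trans (Finset.card_union_le _ _)
      (add_le_add Finset.card_image_le Finset.card_image_le)
end

section
/- Let r be an even nonnegative integer, let k ≥ 1 and 0 ≤ t ≤ r/2 be integers, and let s, L be positive integers such that k(k+1) divides s and 2k(k+1)·L ≥ ((r+2)(k+1)² − 2t + 2k(k+1))·s. Then there exists an (L,s,r) PPRIC code with exactly ((r+2)(k+1))/2 + t + 1 codewords. -/
namespace P13
open Finset

/-- generic codeword: indicator of `[off, off+n*q) \ [off+cls*q, off+cls*q+q)`. -/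
def cw (L off q n cls : ℕ) : Fin L → ZMod 2 :=
  fun i => if off ≤ i.1 ∧ i.1 < off + n*q ∧ ¬(off + cls*q ≤ i.1 ∧ i.1 < off + cls*q + q)
    then 1 else 0

lemma cw_eq_one {L off q n cls : ℕ} {p : Fin L}
    (h : off ≤ p.1 ∧ p.1 < off + n*q ∧ ¬(off + cls*q ≤ p.1 ∧ p.1 < off + cls*q + q)) :
    cw L off q n cls p = 1 := if_pos h

lemma cw_eq_zero {L off q n cls : ℕ} {p : Fin L}
    (h : ¬(off ≤ p.1 ∧ p.1 < off + n*q ∧ ¬(off + cls*q ≤ p.1 ∧ p.1 < off + cls*q + q))) :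
    cw L off q n cls p = 0 := if_neg h

/-- support of a word -/
def supp {L : ℕ} (c : Fin L → ZMod 2) : Finset (Fin L) :=
  Finset.univ.filter (fun i => c i ≠ 0)

lemma norm_eq_supp {L : ℕ} (c : Fin L → ZMod 2) : hammingNorm c = (supp c).card := rfl

lemma supp_cw (L off q n cls : ℕ) :
    supp (cw L off q n cls)
      = Finset.univ.filter (fun i : Fin L =>
          off ≤ i.1 ∧ i.1 < off + n*q ∧ ¬(off + cls*q ≤ i.1 ∧ i.1 < off + cls*q + q)) := by
  ext i
  rw [supp, mem_filter]
  simp only [supp, cw, mem_filter, mem_univ, true_and]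
  split_ifs with h
  · simp [h]
  · simpa using h

lemma card_fin_filter (L : ℕ) (P : ℕ → Prop) [DecidablePred P] :
    ((Finset.univ : Finset (Fin L)).filter (fun i => P i.1)).card
      = ((Finset.range L).filter P).card := by
  apply Finset.card_nbij (fun a => a.1)
  · intro a ha; simp only [Finset.mem_coe, mem_filter, mem_univ, true_and] at ha
    simp [ha, a.2]
  · intro a _ b _ h; exact Fin.ext h
  · intro b hb; simp only [Finset.coe_filter, mem_range, Set.mem_setOf_eq] at hb
    exact ⟨⟨b, hb.1⟩, by simp [hb.2], rfl⟩

lemma card_interval_diff (L a b c d : ℕ) (hbL : b ≤ L) (hac : a ≤ c) (hdb : d ≤ b) :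
    ((Finset.univ : Finset (Fin L)).filter
        (fun i => a ≤ i.1 ∧ i.1 < b ∧ ¬(c ≤ i.1 ∧ i.1 < d))).card = (b - a) - (d - c) := by
  rw [card_fin_filter L (fun j => a ≤ j ∧ j < b ∧ ¬(c ≤ j ∧ j < d))]
  have h1 : (Finset.range L).filter (fun j => a ≤ j ∧ j < b ∧ ¬(c ≤ j ∧ j < d))
      = Finset.Ico a b \ Finset.Ico c d := by
    ext j
    simp only [mem_filter, mem_range, mem_sdiff, mem_Ico]
    omega
  rw [h1, Finset.card_sdiff_of_subset (by intro j hj; simp only [mem_Ico] at hj ⊢; omega),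
    Nat.card_Ico, Nat.card_Ico]

lemma card_interval_out (L a b c d : ℕ) (hbL : b ≤ L) (hbc : b ≤ c) :
    ((Finset.univ : Finset (Fin L)).filter
        (fun i => a ≤ i.1 ∧ i.1 < b ∧ ¬(c ≤ i.1 ∧ i.1 < d))).card = b - a := by
  rw [card_fin_filter L (fun j => a ≤ j ∧ j < b ∧ ¬(c ≤ j ∧ j < d))]
  have h1 : (Finset.range L).filter (fun j => a ≤ j ∧ j < b ∧ ¬(c ≤ j ∧ j < d))
      = Finset.Ico a b := by
    ext j
    simp only [mem_filter, mem_range, mem_Ico]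
    omega
  rw [h1, Nat.card_Ico]

lemma dist_add_inter {L : ℕ} (c y : Fin L → ZMod 2) :
    hammingDist c y + 2 * ((supp c ∩ supp y).card) = (supp c).card + (supp y).card := by
  have hkey : ∀ a b : ZMod 2, a ≠ b ↔ ((a ≠ 0 ∧ ¬ b ≠ 0) ∨ (b ≠ 0 ∧ ¬ a ≠ 0)) := by decide
  have h1 : (Finset.univ.filter (fun i => c i ≠ y i))
      = (supp c \ supp y) ∪ (supp y \ supp c) := by
    ext i
    simp only [supp, mem_filter, mem_univ, true_and, mem_union, mem_sdiff]
    exact hkey (c i) (y i)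
  have h2 : hammingDist c y = ((supp c \ supp y) ∪ (supp y \ supp c)).card := by
    rw [← h1]; rfl
  rw [h2, card_union_of_disjoint disjoint_sdiff_sdiff]
  have h3 := Finset.card_sdiff_add_card_inter (supp c) (supp y)
  have h4 := Finset.card_sdiff_add_card_inter (supp y) (supp c)
  rw [Finset.inter_comm] at h4
  omega

lemma gadget_bound (L off q n jj z : ℕ) (hz : z = n * q) (hq : 1 ≤ q) (hn : 1 ≤ n)
    (hjj : 1 ≤ jj) (W : Finset (Fin L))
    (hall : ∀ cls, cls < n → jj ≤ ((supp (cw L off q n cls)) ∩ W).card) :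
    jj + 1 ≤ ((Finset.univ.filter (fun i : Fin L => off ≤ i.1 ∧ i.1 < off + z)) ∩ W).card := by
  subst hz
  set B := (Finset.univ.filter (fun i : Fin L => off ≤ i.1 ∧ i.1 < off + n*q)) ∩ W with hB
  have hsub : ∀ cls, supp (cw L off q n cls) ∩ W ⊆ B := by
    intro cls x hx
    rw [supp_cw] at hx
    simp only [hB, mem_inter, mem_filter, mem_univ, true_and] at hx ⊢
    exact ⟨⟨hx.1.1, hx.1.2.1⟩, hx.2⟩
  have h0 : jj ≤ B.card := le_trans (hall 0 hn) (card_le_card (hsub 0))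
  obtain ⟨z, hz⟩ : B.Nonempty := card_pos.mp (by omega)
  have hzc : (off ≤ z.1 ∧ z.1 < off + n*q) ∧ z ∈ W := by
    simpa only [hB, mem_inter, mem_filter, mem_univ, true_and] using hz
  have hmod := Nat.div_add_mod (z.1 - off) q
  have hmlt : (z.1 - off) % q < q := Nat.mod_lt _ hq
  set cls := (z.1 - off) / q with hcls
  have hcn : cls < n := by
    rcases Nat.lt_or_ge cls n with h | h
    · exact h
    · exfalso
      have h1 : q * n ≤ q * cls := Nat.mul_le_mul_left q h
      have h2 : n * q = q * n := Nat.mul_comm _ _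
      omega
  have hzin : off + cls*q ≤ z.1 ∧ z.1 < off + cls*q + q := by
    have h2 : cls * q = q * cls := Nat.mul_comm _ _
    omega
  have hstep : supp (cw L off q n cls) ∩ W ⊆ B.erase z := by
    intro x hx
    rw [mem_erase]
    refine ⟨?_, hsub cls hx⟩
    rw [supp_cw] at hx
    simp only [mem_inter, mem_filter, mem_univ, true_and] at hx
    intro hxz
    exact hx.1.2.2 (by rw [hxz]; exact hzin)
  have h5 : jj ≤ (B.erase z).card := le_trans (hall cls hcn) (card_le_card hstep)
  have h6 : (B.erase z).card = B.card - 1 := card_erase_of_mem hz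
  have h7 : 1 ≤ B.card := card_pos.mpr ⟨z, hz⟩
  omega

/-- offsets of the blocks -/
def offG (AB BB t : ℕ) (g : ℕ) : ℕ := if g ≤ t then g * AB else t * AB + (g - t) * BB
/-- sizes of the blocks -/
def szG (AB BB s t v : ℕ) (g : ℕ) : ℕ := if g < t then AB else if g < t + v then BB else s

lemma offG_step (AB BB s t v g : ℕ) (hg : g < t + v) :
    offG AB BB t g + szG AB BB s t v g ≤ offG AB BB t (g+1) := by
  by_cases h1 : g < t
  · rw [offG, offG, szG, if_pos (by omega : g ≤ t), if_pos (by omega : g + 1 ≤ t), if_pos h1]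
    have : (g+1) * AB = g * AB + AB := by ring
    omega
  · rw [offG, offG, szG, if_neg h1, if_pos hg, if_neg (by omega : ¬ (g + 1 ≤ t))]
    have h3 : (g + 1 - t) * BB = (g - t) * BB + BB := by
      have : g + 1 - t = (g - t) + 1 := by omega
      rw [this]; ring
    by_cases h2 : g ≤ t
    · have hgt : g = t := by omega
      subst hgt
      rw [if_pos (le_refl g)]
      have h4 : g + 1 - g = 1 := by omega
      rw [h4, one_mul]
    · rw [if_neg h2]
      omega

lemma offG_mono (AB BB s t v : ℕ) : ∀ g2, g2 ≤ t + v → ∀ g1, g1 < g2 →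
    offG AB BB t g1 + szG AB BB s t v g1 ≤ offG AB BB t g2 := by
  intro g2
  induction g2 with
  | zero => omega
  | succ g ih =>
    intro hle g1 hlt
    rcases Nat.lt_or_ge g1 g with h | h
    · calc offG AB BB t g1 + szG AB BB s t v g1 ≤ offG AB BB t g := ih (by omega) g1 h
        _ ≤ offG AB BB t g + szG AB BB s t v g := Nat.le_add_right _ _
        _ ≤ offG AB BB t (g+1) := offG_step AB BB s t v g (by omega)
    · have : g1 = g := by omega
      subst this
      exact offG_step AB BB s t v g1 (by omega)

lemma cw_ne_sep (L o1 q1 n1 c1 o2 q2 n2 c2 : ℕ) (hq1 : 1 ≤ q1) (hn1 : 1 ≤ n1)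
    (hc1 : c1 = 0 → 2 ≤ n1) (hsep : o1 + n1*q1 ≤ o2) (hL2 : o2 + n2*q2 ≤ L) :
    cw L o1 q1 n1 c1 ≠ cw L o2 q2 n2 c2 := by
  intro heq
  by_cases h0 : c1 = 0
  · subst h0
    have hn2 : 2 ≤ n1 := hc1 rfl
    have hbb : 2*q1 ≤ n1*q1 := Nat.mul_le_mul hn2 (le_refl _)
    have hpL : o1 + q1 < L := by omega
    have h1 : cw L o1 q1 n1 0 ⟨o1 + q1, hpL⟩ = 1 := by
      apply cw_eq_one
      refine ⟨show o1 ≤ o1 + q1 by omega, show o1 + q1 < o1 + n1*q1 by omega, ?_⟩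
      intro hcon
      have h01 : (0:ℕ) * q1 = 0 := by ring
      have hcon2 : o1 + q1 < o1 + 0*q1 + q1 := hcon.2
      omega
    have h2 : cw L o2 q2 n2 c2 ⟨o1 + q1, hpL⟩ = 0 := by
      apply cw_eq_zero
      intro hcon
      have hcon1 : o2 ≤ o1 + q1 := hcon.1
      omega
    have h := congrFun heq ⟨o1 + q1, hpL⟩
    rw [h1, h2] at h
    exact one_ne_zero h
  · have hc1' : 1 ≤ c1 := Nat.one_le_iff_ne_zero.mpr h0
    have hbb : 1*q1 ≤ n1*q1 := Nat.mul_le_mul hn1 (le_refl _)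
    have hcc : 1*q1 ≤ c1*q1 := Nat.mul_le_mul hc1' (le_refl _)
    have hpL : o1 < L := by omega
    have h1 : cw L o1 q1 n1 c1 ⟨o1, hpL⟩ = 1 := by
      apply cw_eq_one
      refine ⟨le_refl _, show o1 < o1 + n1*q1 by omega, ?_⟩
      intro hcon
      have hcon1 : o1 + c1*q1 ≤ o1 := hcon.1
      omega
    have h2 : cw L o2 q2 n2 c2 ⟨o1, hpL⟩ = 0 := by
      apply cw_eq_zero
      intro hcon
      have hcon1 : o2 ≤ o1 := hcon.1
      omega
    have h := congrFun heq ⟨o1, hpL⟩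
    rw [h1, h2] at h
    exact one_ne_zero h

lemma cw_ne_same (L o q n c1 c2 : ℕ) (hq : 1 ≤ q) (h1 : c1 < n) (h2 : c2 < n)
    (hne : c1 ≠ c2) (hL2 : o + n*q ≤ L) :
    cw L o q n c1 ≠ cw L o q n c2 := by
  intro heq
  have hb2 : c1*q + q ≤ n*q := by
    have h3 : (c1+1)*q ≤ n*q := Nat.mul_le_mul (by omega) (le_refl _)
    have h4 : (c1+1)*q = c1*q + q := by ring
    omega
  have hpL : o + c1*q < L := by omega
  have hv1 : cw L o q n c1 ⟨o + c1*q, hpL⟩ = 0 := by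
    apply cw_eq_zero
    intro hcon
    exact hcon.2.2 ⟨le_refl _, show o + c1*q < o + c1*q + q by omega⟩
  have hdisj : ¬(o + c2*q ≤ o + c1*q ∧ o + c1*q < o + c2*q + q) := by
    rcases Nat.lt_or_ge c1 c2 with h | h
    · have h3 : (c1+1)*q ≤ c2*q := Nat.mul_le_mul (by omega) (le_refl _)
      have h4 : (c1+1)*q = c1*q + q := by ring
      omega
    · have h6 : (c2+1)*q ≤ c1*q := Nat.mul_le_mul (by omega) (le_refl _)
      have h7 : (c2+1)*q = c2*q + q := by ring
      omega
  have hv2 : cw L o q n c2 ⟨o + c1*q, hpL⟩ = 1 := by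
    apply cw_eq_one
    refine ⟨show o ≤ o + c1*q by omega, show o + c1*q < o + n*q by omega, ?_⟩
    intro hcon
    exact hdisj ⟨hcon.1, hcon.2⟩
  have h := congrFun heq ⟨o + c1*q, hpL⟩
  rw [hv1, hv2] at h
  exact zero_ne_one h

/-- type A codeword -/
def Acw (L k u a i : ℕ) : Fin L → ZMod 2 := cw L (a * ((k+2)*(k*u))) (k*u) (k+2) i
/-- type B codeword -/
def Bcw (L k u t b i : ℕ) : Fin L → ZMod 2 :=
  cw L (t * ((k+2)*(k*u)) + b * ((k+1)*((k+1)*u))) ((k+1)*u) (k+1) i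
/-- the singleton codeword -/
def Scw (L k u t v s : ℕ) : Fin L → ZMod 2 :=
  cw L (t * ((k+2)*(k*u)) + v * ((k+1)*((k+1)*u))) s 1 1

/-- the code -/
def codeC (L k u t v s : ℕ) : Finset (Fin L → ZMod 2) :=
  ((Finset.range t ×ˢ Finset.range (k+2)).image fun p => Acw L k u p.1 p.2) ∪
  ((Finset.range v ×ˢ Finset.range (k+1)).image fun p => Bcw L k u t p.1 p.2) ∪
  {Scw L k u t v s}

end P13

theorem stmt13 (r k t s L : ℕ) (hr : Even r) (hk : 1 ≤ k)
    (ht : t ≤ r / 2) (hs : 0 < s) (hL : 0 < L)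
    (hdvd : k * (k + 1) ∣ s)
    (hineq : ((r + 2) * (k + 1) ^ 2 - 2 * t + 2 * k * (k + 1)) * s ≤ 2 * k * (k + 1) * L) :
    ∃ C : Finset (Fin L → ZMod 2),
      IsPPRIC L s r ↑C ∧ C.card = ((r + 2) * (k + 1)) / 2 + t + 1 := by
  obtain ⟨e, he⟩ := hr
  obtain ⟨u, hu⟩ := hdvd
  have hu1 : 1 ≤ u := by
    rcases Nat.eq_zero_or_pos u with h | h
    · subst h; simp at hu; omega
    · exact h
  have hte : t ≤ e := by omega
  set v := e + 1 - t with hvdef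
  have hv : t + v = e + 1 := by omega
  have hv1 : 1 ≤ v := by omega
  -- length bound
  have hkey : (r+2)*(k+1)^2 - 2*t = 2*(t*(k*(k+2))) + 2*(v*((k+1)^2)) := by
    apply Nat.sub_eq_of_eq_add
    have h2 : (r+2) = 2*(t+v) := by omega
    calc (r+2)*(k+1)^2 = (2*(t+v))*(k+1)^2 := by rw [← h2]
      _ = 2*(t*(k*(k+2))) + 2*(v*((k+1)^2)) + 2*t := by ring
  have hU2 : 2*(k*(k+1)) * (t*((k+2)*(k*u)) + v*((k+1)*((k+1)*u)) + s)
      = ((r+2)*(k+1)^2 - 2*t + 2*k*(k+1))*s := by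
    rw [hkey, hu]; ring
  have hUL : t*((k+2)*(k*u)) + v*((k+1)*((k+1)*u)) + s ≤ L := by
    have hpos : 0 < 2*(k*(k+1)) := by positivity
    refine Nat.le_of_mul_le_mul_left ?_ hpos
    rw [hU2]
    calc ((r+2)*(k+1)^2 - 2*t + 2*k*(k+1))*s ≤ 2*k*(k+1)*L := hineq
      _ = 2*(k*(k+1))*L := by ring
  -- basic positivity
  have hq1 : 1 ≤ k*u := by
    have := Nat.mul_pos (show 0 < k by omega) (show 0 < u by omega); omega
  have hq2 : 1 ≤ (k+1)*u := by
    have := Nat.mul_pos (show 0 < k+1 by omega) (show 0 < u by omega); omega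
  -- block ends
  have hendA : ∀ a, a < t → a * ((k+2)*(k*u)) + (k+2)*(k*u) ≤ L := by
    intro a ha
    have h1 : (a+1) * ((k+2)*(k*u)) ≤ t * ((k+2)*(k*u)) := Nat.mul_le_mul (by omega) (le_refl _)
    have h2 : (a+1) * ((k+2)*(k*u)) = a*((k+2)*(k*u)) + (k+2)*(k*u) := by ring
    omega
  have hendB : ∀ b, b < v →
      t * ((k+2)*(k*u)) + b * ((k+1)*((k+1)*u)) + (k+1)*((k+1)*u) ≤ L := by
    intro b hb
    have h1 : (b+1) * ((k+1)*((k+1)*u)) ≤ v * ((k+1)*((k+1)*u)) :=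
      Nat.mul_le_mul (by omega) (le_refl _)
    have h2 : (b+1) * ((k+1)*((k+1)*u)) = b*((k+1)*((k+1)*u)) + (k+1)*((k+1)*u) := by ring
    omega
  -- separations towards later blocks
  have hsepAB : ∀ a, a < t → a * ((k+2)*(k*u)) + (k+2)*(k*u) ≤ t * ((k+2)*(k*u)) := by
    intro a ha
    have h1 : (a+1) * ((k+2)*(k*u)) ≤ t * ((k+2)*(k*u)) := Nat.mul_le_mul (by omega) (le_refl _)
    have h2 : (a+1) * ((k+2)*(k*u)) = a*((k+2)*(k*u)) + (k+2)*(k*u) := by ring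
    omega
  have hsepBS : ∀ b, b < v →
      t * ((k+2)*(k*u)) + b * ((k+1)*((k+1)*u)) + (k+1)*((k+1)*u)
        ≤ t * ((k+2)*(k*u)) + v * ((k+1)*((k+1)*u)) := by
    intro b hb
    have h1 : (b+1) * ((k+1)*((k+1)*u)) ≤ v * ((k+1)*((k+1)*u)) :=
      Nat.mul_le_mul (by omega) (le_refl _)
    have h2 : (b+1) * ((k+1)*((k+1)*u)) = b*((k+1)*((k+1)*u)) + (k+1)*((k+1)*u) := by ring
    omega
  have hendS : t * ((k+2)*(k*u)) + v * ((k+1)*((k+1)*u)) + 1*s ≤ L := by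
    have : (1:ℕ)*s = s := one_mul s
    omega
  -- distinctness lemmas
  have hneAA : ∀ a i a' i', a < t → i < k+2 → a' < t → i' < k+2 → (a, i) ≠ (a', i') →
      P13.Acw L k u a i ≠ P13.Acw L k u a' i' := by
    intro a i a' i' ha hi ha' hi' hne
    rcases Nat.lt_trichotomy a a' with h | h | h
    · refine P13.cw_ne_sep L _ _ _ _ _ _ _ _ hq1 (by omega) (fun _ => by omega) ?_ (hendA a' ha')
      have h1 : (a+1) * ((k+2)*(k*u)) ≤ a' * ((k+2)*(k*u)) := Nat.mul_le_mul (by omega) (le_refl _)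
      have h2 : (a+1) * ((k+2)*(k*u)) = a*((k+2)*(k*u)) + (k+2)*(k*u) := by ring
      omega
    · subst h
      have hii : i ≠ i' := by
        intro hii; exact hne (by rw [hii])
      exact P13.cw_ne_same L _ _ _ _ _ hq1 hi hi' hii (hendA a ha)
    · intro heq
      refine P13.cw_ne_sep L _ _ _ _ _ _ _ _ hq1 (by omega) (fun _ => by omega) ?_ (hendA a ha) heq.symm
      have h1 : (a'+1) * ((k+2)*(k*u)) ≤ a * ((k+2)*(k*u)) := Nat.mul_le_mul (by omega) (le_refl _)
      have h2 : (a'+1) * ((k+2)*(k*u)) = a'*((k+2)*(k*u)) + (k+2)*(k*u) := by ring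
      omega
  have hneBB : ∀ b i b' i', b < v → i < k+1 → b' < v → i' < k+1 → (b, i) ≠ (b', i') →
      P13.Bcw L k u t b i ≠ P13.Bcw L k u t b' i' := by
    intro b i b' i' hb hi hb' hi' hne
    rcases Nat.lt_trichotomy b b' with h | h | h
    · refine P13.cw_ne_sep L _ _ _ _ _ _ _ _ hq2 (by omega) (fun _ => by omega) ?_ (hendB b' hb')
      have h1 : (b+1) * ((k+1)*((k+1)*u)) ≤ b' * ((k+1)*((k+1)*u)) :=
        Nat.mul_le_mul (by omega) (le_refl _)
      have h2 : (b+1) * ((k+1)*((k+1)*u)) = b*((k+1)*((k+1)*u)) + (k+1)*((k+1)*u) := by ring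
      omega
    · subst h
      have hii : i ≠ i' := by
        intro hii; exact hne (by rw [hii])
      exact P13.cw_ne_same L _ _ _ _ _ hq2 hi hi' hii (hendB b hb)
    · intro heq
      refine P13.cw_ne_sep L _ _ _ _ _ _ _ _ hq2 (by omega) (fun _ => by omega) ?_ (hendB b hb) heq.symm
      have h1 : (b'+1) * ((k+1)*((k+1)*u)) ≤ b * ((k+1)*((k+1)*u)) :=
        Nat.mul_le_mul (by omega) (le_refl _)
      have h2 : (b'+1) * ((k+1)*((k+1)*u)) = b'*((k+1)*((k+1)*u)) + (k+1)*((k+1)*u) := by ring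
      omega
  have hneAB : ∀ a i b i', a < t → b < v →
      P13.Acw L k u a i ≠ P13.Bcw L k u t b i' := by
    intro a i b i' ha hb
    refine P13.cw_ne_sep L _ _ _ _ _ _ _ _ hq1 (by omega) (fun _ => by omega) ?_ (hendB b hb)
    have h3 := hsepAB a ha
    omega
  have hneAS : ∀ a i, a < t → P13.Acw L k u a i ≠ P13.Scw L k u t v s := by
    intro a i ha
    refine P13.cw_ne_sep L _ _ _ _ _ _ _ _ hq1 (by omega) (fun _ => by omega) ?_ hendS
    have h3 := hsepAB a ha
    omega
  have hneBS : ∀ b i, b < v → P13.Bcw L k u t b i ≠ P13.Scw L k u t v s := by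
    intro b i hb
    refine P13.cw_ne_sep L _ _ _ _ _ _ _ _ hq2 (by omega) (fun _ => by omega) ?_ hendS
    exact hsepBS b hb
  -- membership
  have hAmem : ∀ a i, a < t → i < k+2 → P13.Acw L k u a i ∈ P13.codeC L k u t v s := by
    intro a i ha hi
    apply Finset.mem_union_left
    apply Finset.mem_union_left
    exact Finset.mem_image.mpr ⟨(a,i),
      Finset.mem_product.mpr ⟨Finset.mem_range.mpr ha, Finset.mem_range.mpr hi⟩, rfl⟩
  have hBmem : ∀ b i, b < v → i < k+1 → P13.Bcw L k u t b i ∈ P13.codeC L k u t v s := by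
    intro b i hb hi
    apply Finset.mem_union_left
    apply Finset.mem_union_right
    exact Finset.mem_image.mpr ⟨(b,i),
      Finset.mem_product.mpr ⟨Finset.mem_range.mpr hb, Finset.mem_range.mpr hi⟩, rfl⟩
  have hSmem : P13.Scw L k u t v s ∈ P13.codeC L k u t v s :=
    Finset.mem_union_right _ (Finset.mem_singleton_self _)
  -- weights
  have hwt : ∀ c ∈ P13.codeC L k u t v s, hammingNorm c = s := by
    intro c hc
    rw [P13.codeC] at hc
    rcases Finset.mem_union.mp hc with hc1 | hc1
    · rcases Finset.mem_union.mp hc1 with hc2 | hc2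
      · obtain ⟨⟨a, ii⟩, hmem, rfl⟩ := Finset.mem_image.mp hc2
        rw [Finset.mem_product, Finset.mem_range, Finset.mem_range] at hmem
        have hbL := hendA a hmem.1
        have hdb : a*((k+2)*(k*u)) + ii*(k*u) + k*u ≤ a*((k+2)*(k*u)) + (k+2)*(k*u) := by
          have h1 : (ii+1)*(k*u) ≤ (k+2)*(k*u) := Nat.mul_le_mul (by omega) (le_refl _)
          have h2 : (ii+1)*(k*u) = ii*(k*u) + k*u := by ring
          omega
        have hcd := P13.card_interval_diff L (a*((k+2)*(k*u))) (a*((k+2)*(k*u)) + (k+2)*(k*u))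
            (a*((k+2)*(k*u)) + ii*(k*u)) (a*((k+2)*(k*u)) + ii*(k*u) + k*u)
            hbL (Nat.le_add_right _ _) hdb
        show hammingNorm (P13.cw L (a * ((k+2)*(k*u))) (k*u) (k+2) ii) = s
        rw [P13.norm_eq_supp, P13.supp_cw, hcd]
        have h3 : (k+2)*(k*u) = s + k*u := by rw [hu]; ring
        omega
      · obtain ⟨⟨b, ii⟩, hmem, rfl⟩ := Finset.mem_image.mp hc2
        rw [Finset.mem_product, Finset.mem_range, Finset.mem_range] at hmem
        have hbL := hendB b hmem.1
        have hdb : (t*((k+2)*(k*u)) + b*((k+1)*((k+1)*u))) + ii*((k+1)*u) + (k+1)*u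
            ≤ (t*((k+2)*(k*u)) + b*((k+1)*((k+1)*u))) + (k+1)*((k+1)*u) := by
          have h1 : (ii+1)*((k+1)*u) ≤ (k+1)*((k+1)*u) := Nat.mul_le_mul (by omega) (le_refl _)
          have h2 : (ii+1)*((k+1)*u) = ii*((k+1)*u) + (k+1)*u := by ring
          omega
        have hcd := P13.card_interval_diff L (t*((k+2)*(k*u)) + b*((k+1)*((k+1)*u)))
            ((t*((k+2)*(k*u)) + b*((k+1)*((k+1)*u))) + (k+1)*((k+1)*u))
            ((t*((k+2)*(k*u)) + b*((k+1)*((k+1)*u))) + ii*((k+1)*u))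
            ((t*((k+2)*(k*u)) + b*((k+1)*((k+1)*u))) + ii*((k+1)*u) + (k+1)*u)
            (by omega) (Nat.le_add_right _ _) hdb
        show hammingNorm
          (P13.cw L (t * ((k+2)*(k*u)) + b * ((k+1)*((k+1)*u))) ((k+1)*u) (k+1) ii) = s
        rw [P13.norm_eq_supp, P13.supp_cw, hcd]
        have h3 : (k+1)*((k+1)*u) = s + (k+1)*u := by rw [hu]; ring
        omega
    · have hcs : c = P13.Scw L k u t v s := Finset.mem_singleton.mp hc1
      subst hcs
      have hcd := P13.card_interval_out L (t*((k+2)*(k*u)) + v*((k+1)*((k+1)*u)))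
          ((t*((k+2)*(k*u)) + v*((k+1)*((k+1)*u))) + 1*s)
          ((t*((k+2)*(k*u)) + v*((k+1)*((k+1)*u))) + 1*s)
          ((t*((k+2)*(k*u)) + v*((k+1)*((k+1)*u))) + 1*s + s)
          (by omega) (le_refl _)
      show hammingNorm (P13.cw L (t * ((k+2)*(k*u)) + v * ((k+1)*((k+1)*u))) s 1 1) = s
      rw [P13.norm_eq_supp, P13.supp_cw, hcd]
      have h3 : (1:ℕ)*s = s := one_mul s
      omega
  refine ⟨P13.codeC L k u t v s, ⟨hwt, ?_⟩, ?_⟩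
  · -- ball equality
    ext y
    simp only [pball, Set.mem_setOf_eq, Set.mem_iInter, Finset.mem_coe]
    constructor
    · intro hy c hc
      have h1 := hammingDist_triangle c 0 y
      rw [hammingDist_zero_right] at h1
      have h2 : hammingDist 0 y = hammingNorm y := congrFun hammingDist_zero_left y
      have h3 := hwt c hc
      omega
    · intro hy
      have h2 : hammingDist 0 y = hammingNorm y := congrFun hammingDist_zero_left y
      by_contra hcon
      push_neg at hcon
      have hw : r + 1 ≤ (P13.supp y).card := by
        rw [P13.norm_eq_supp] at h2
        omega
      set W := P13.supp y with hW
      obtain ⟨jj, hjj1, hjj2, hjj3⟩ :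
          ∃ jj, 1 ≤ jj ∧ W.card ≤ r + 2*jj ∧ 2*jj ≤ W.card - r + 1 :=
        ⟨(W.card - r + 1)/2, by omega⟩
      have HC : ∀ c ∈ P13.codeC L k u t v s, jj ≤ ((P13.supp c) ∩ W).card := by
        intro c hc
        have h1 := P13.dist_add_inter c y
        rw [← hW] at h1
        have h3 := hwt c hc
        rw [P13.norm_eq_supp] at h3
        have h4 := hy c hc
        omega
      set Bl : ℕ → Finset (Fin L) := fun g =>
        (Finset.univ.filter (fun i : Fin L =>
          P13.offG ((k+2)*(k*u)) ((k+1)*((k+1)*u)) t g ≤ i.1 ∧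
          i.1 < P13.offG ((k+2)*(k*u)) ((k+1)*((k+1)*u)) t g
                + P13.szG ((k+2)*(k*u)) ((k+1)*((k+1)*u)) s t v g)) ∩ W with hBl
      have hbound : ∀ g ∈ Finset.range (t+v+1),
          (if g < t + v then jj + 1 else jj) ≤ (Bl g).card := by
        intro g hg
        rw [Finset.mem_range] at hg
        by_cases hg1 : g < t
        · rw [if_pos (by omega)]
          have ho : P13.offG ((k+2)*(k*u)) ((k+1)*((k+1)*u)) t g = g * ((k+2)*(k*u)) :=
            if_pos (by omega)
          have hsz : P13.szG ((k+2)*(k*u)) ((k+1)*((k+1)*u)) s t v g = (k+2)*(k*u) := if_pos hg1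
          simp only [hBl, ho, hsz]
          exact P13.gadget_bound L _ (k*u) (k+2) jj _ rfl hq1 (by omega) hjj1 W
            (fun cls hc => HC _ (hAmem g cls hg1 hc))
        · by_cases hg2 : g < t + v
          · rw [if_pos hg2]
            have ho : P13.offG ((k+2)*(k*u)) ((k+1)*((k+1)*u)) t g
                = t * ((k+2)*(k*u)) + (g-t) * ((k+1)*((k+1)*u)) := by
              rw [P13.offG]
              by_cases h : g ≤ t
              · have hgt : g = t := by omega
                rw [if_pos h, hgt]
                have h0 : t - t = 0 := by omega
                rw [h0]
                simp
              · rw [if_neg h]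
            have hsz : P13.szG ((k+2)*(k*u)) ((k+1)*((k+1)*u)) s t v g = (k+1)*((k+1)*u) := by
              rw [P13.szG, if_neg hg1, if_pos hg2]
            simp only [hBl, ho, hsz]
            exact P13.gadget_bound L _ ((k+1)*u) (k+1) jj _ rfl hq2 (by omega) hjj1 W
              (fun cls hc => HC _ (hBmem (g-t) cls (by omega) hc))
          · rw [if_neg hg2]
            have hgtv : g = t + v := by omega
            have ho : P13.offG ((k+2)*(k*u)) ((k+1)*((k+1)*u)) t g
                = t * ((k+2)*(k*u)) + v * ((k+1)*((k+1)*u)) := by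
              rw [hgtv, P13.offG, if_neg (by omega)]
              have h0 : t + v - t = v := by omega
              rw [h0]
            have hsz : P13.szG ((k+2)*(k*u)) ((k+1)*((k+1)*u)) s t v g = s := by
              rw [P13.szG, if_neg hg1, if_neg hg2]
            have hsubS : P13.supp (P13.Scw L k u t v s) ∩ W ⊆ Bl g := by
              intro x hx
              simp only [P13.Scw, P13.supp_cw] at hx
              simp only [hBl, ho, hsz, Finset.mem_inter, Finset.mem_filter, Finset.mem_univ,
                true_and] at hx ⊢
              have h5 : (1:ℕ)*s = s := one_mul s
              exact ⟨⟨hx.1.1, by omega⟩, hx.2⟩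
            exact le_trans (HC _ hSmem) (Finset.card_le_card hsubS)
      have hdisjkey : ∀ a b, a < b → b ≤ t+v → Disjoint (Bl a) (Bl b) := by
        intro a b hab hble
        rw [Finset.disjoint_left]
        intro x hxa hxb
        have hmono := P13.offG_mono ((k+2)*(k*u)) ((k+1)*((k+1)*u)) s t v b hble a hab
        simp only [hBl, Finset.mem_inter, Finset.mem_filter, Finset.mem_univ, true_and]
          at hxa hxb
        omega
      have hdisj : ∀ g1 ∈ Finset.range (t+v+1), ∀ g2 ∈ Finset.range (t+v+1), g1 ≠ g2 →
          Disjoint (Bl g1) (Bl g2) := by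
        intro g1 h1 g2 h2 hne
        rw [Finset.mem_range] at h1 h2
        rcases Nat.lt_or_ge g1 g2 with h | h
        · exact hdisjkey g1 g2 h (by omega)
        · exact (hdisjkey g2 g1 (by omega) (by omega)).symm
      have hcard1 : ∑ g ∈ Finset.range (t+v+1), (Bl g).card
          = ((Finset.range (t+v+1)).biUnion Bl).card := (Finset.card_biUnion hdisj).symm
      have hsubW : (Finset.range (t+v+1)).biUnion Bl ⊆ W := by
        intro x hx
        rw [Finset.mem_biUnion] at hx
        obtain ⟨g, _, hx⟩ := hx
        simp only [hBl, Finset.mem_inter] at hx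
        exact hx.2
      have hsum2 : ∑ g ∈ Finset.range (t+v+1), (if g < t+v then jj+1 else jj)
          ≤ ∑ g ∈ Finset.range (t+v+1), (Bl g).card := Finset.sum_le_sum hbound
      have hsum3 : ∑ g ∈ Finset.range (t+v+1), (if g < t+v then jj+1 else jj)
          = (t+v)*(jj+1) + jj := by
        rw [Finset.sum_range_succ, if_neg (lt_irrefl _)]
        congr 1
        rw [Finset.sum_congr rfl (fun g hg => if_pos (Finset.mem_range.mp hg)),
          Finset.sum_const, Finset.card_range, smul_eq_mul]
      have hfin : (t+v)*(jj+1) + jj ≤ W.card := by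
        calc (t+v)*(jj+1) + jj = ∑ g ∈ Finset.range (t+v+1), (if g < t+v then jj+1 else jj) :=
              hsum3.symm
          _ ≤ ∑ g ∈ Finset.range (t+v+1), (Bl g).card := hsum2
          _ = ((Finset.range (t+v+1)).biUnion Bl).card := hcard1
          _ ≤ W.card := Finset.card_le_card hsubW
      have hx1 : (t+v)*(jj+1) = (t+v)*jj + (t+v) := by ring
      have hx3 : (t+v)*jj = (e+1)*jj := by rw [hv]
      have hx4 : (e+1)*jj = e*jj + jj := by ring
      have hx2 : e*1 ≤ e*jj := Nat.mul_le_mul (le_refl _) hjj1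
      have hx5 : e*1 = e := by ring
      omega
  · -- cardinality
    have hd1 : Disjoint
        ((Finset.range t ×ˢ Finset.range (k+2)).image fun p => P13.Acw L k u p.1 p.2)
        ((Finset.range v ×ˢ Finset.range (k+1)).image fun p => P13.Bcw L k u t p.1 p.2) := by
      rw [Finset.disjoint_left]
      intro x hx hx'
      obtain ⟨⟨a, i⟩, hm, rfl⟩ := Finset.mem_image.mp hx
      obtain ⟨⟨b, i'⟩, hm', heq⟩ := Finset.mem_image.mp hx'
      rw [Finset.mem_product, Finset.mem_range, Finset.mem_range] at hm hm'
      exact hneAB a i b i' hm.1 hm'.1 heq.symm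
    have hd2 : Disjoint
        (((Finset.range t ×ˢ Finset.range (k+2)).image fun p => P13.Acw L k u p.1 p.2) ∪
          ((Finset.range v ×ˢ Finset.range (k+1)).image fun p => P13.Bcw L k u t p.1 p.2))
        ({P13.Scw L k u t v s} : Finset (Fin L → ZMod 2)) := by
      rw [Finset.disjoint_left]
      intro x hx hx'
      have hxs : x = P13.Scw L k u t v s := Finset.mem_singleton.mp hx'
      subst hxs
      rcases Finset.mem_union.mp hx with h | h
      · obtain ⟨⟨a, i⟩, hm, heq⟩ := Finset.mem_image.mp h
        rw [Finset.mem_product, Finset.mem_range, Finset.mem_range] at hm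
        exact hneAS a i hm.1 heq
      · obtain ⟨⟨b, i⟩, hm, heq⟩ := Finset.mem_image.mp h
        rw [Finset.mem_product, Finset.mem_range, Finset.mem_range] at hm
        exact hneBS b i hm.1 heq
    have hcA : ((Finset.range t ×ˢ Finset.range (k+2)).image
        fun p => P13.Acw L k u p.1 p.2).card = t * (k+2) := by
      rw [Finset.card_image_of_injOn, Finset.card_product, Finset.card_range,
        Finset.card_range]
      intro p hp p' hp' heq
      simp only [Finset.coe_product, Set.mem_prod, Finset.mem_coe, Finset.mem_range] at hp hp'
      by_contra hne
      exact hneAA p.1 p.2 p'.1 p'.2 hp.1 hp.2 hp'.1 hp'.2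
        (by intro h; exact hne (Prod.ext (congrArg Prod.fst h) (congrArg Prod.snd h))) heq
    have hcB : ((Finset.range v ×ˢ Finset.range (k+1)).image
        fun p => P13.Bcw L k u t p.1 p.2).card = v * (k+1) := by
      rw [Finset.card_image_of_injOn, Finset.card_product, Finset.card_range,
        Finset.card_range]
      intro p hp p' hp' heq
      simp only [Finset.coe_product, Set.mem_prod, Finset.mem_coe, Finset.mem_range] at hp hp'
      by_contra hne
      exact hneBB p.1 p.2 p'.1 p'.2 hp.1 hp.2 hp'.1 hp'.2
        (by intro h; exact hne (Prod.ext (congrArg Prod.fst h) (congrArg Prod.snd h))) heq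
    rw [P13.codeC, Finset.card_union_of_disjoint hd2, Finset.card_union_of_disjoint hd1,
      hcA, hcB, Finset.card_singleton]
    have h1 : (r+2)*(k+1) = 2*((t+v)*(k+1)) := by
      rw [show r + 2 = 2*(t+v) by omega]; ring
    have h2 : ((r+2)*(k+1))/2 = (t+v)*(k+1) := by
      rw [h1]; exact Nat.mul_div_cancel_left _ (by norm_num)
    have h3 : t*(k+2) + v*(k+1) = (t+v)*(k+1) + t := by ring
    omega
end

section
/- Let r, s, L be nonnegative integers with s ≥ 1 and L ≥ 2s + r + 1, let q ≥ 2 be an integer, and let C be a binary (L,s,r) PPRIC code. Let ι : ZMod 2 → Fin q be the map sending 0 to 0 and 1 to 1, and let C' = { ι ∘ c : c ∈ C } ⊆ (Fin L → Fin q). Then C' is a q-ary (L,s,r) PPRIC code, i.e., every codeword of C' has exactly s nonzero coordinates and { y : Fin L → Fin q | wt(y) ≤ r } = ⋂_{c' ∈ C'} { y | d(c', y) ≤ r + s }, where d is the Hamming distance on Fin L → Fin q and wt(y) the number of nonzero coordinates of y. -/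
/-- Hamming weight in the `q`-ary Hamming space: the number of nonzero coordinates. -/
def qwt (q L : ℕ) (y : Fin L → Fin q) : ℕ :=
  (Finset.univ.filter (fun i => (y i : ℕ) ≠ 0)).card

theorem stmt15 (L r s q : ℕ) (hs : 1 ≤ s) (hL : 2 * s + r + 1 ≤ L) (hq : 2 ≤ q)
    (C : Set (Fin L → ZMod 2)) (hC : IsPPRIC L s r C)
    (ι : ZMod 2 → Fin q) (hι : ∀ a : ZMod 2, ((ι a : Fin q) : ℕ) = a.val) :
    (∀ c' ∈ (fun c => ι ∘ c) '' C, qwt q L c' = s) ∧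
    {y : Fin L → Fin q | qwt q L y ≤ r} =
      ⋂ c' ∈ (fun c => ι ∘ c) '' C, {y : Fin L → Fin q | hammingDist c' y ≤ r + s} := by
  obtain ⟨hw, hball⟩ := hC
  have hdichot : ∀ a : ZMod 2, a = 0 ∨ a = 1 := by decide
  -- weight of images
  have hwt : ∀ c : Fin L → ZMod 2, qwt q L (ι ∘ c) = hammingNorm c := by
    intro c
    unfold qwt hammingNorm
    congr 1
    apply Finset.filter_congr
    intro i _
    simp only [Function.comp_apply, hι]
    constructor
    · intro h h0; exact h (by simp [h0])
    · intro h h0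
      exact h ((ZMod.val_eq_zero _).mp h0)
  constructor
  · rintro c' ⟨c, hc, rfl⟩
    rw [hwt c, hw c hc]
  · ext y
    simp only [Set.mem_setOf_eq, Set.mem_iInter]
    constructor
    · rintro hy c' ⟨c, hc, rfl⟩
      simp only [Set.mem_setOf_eq]
      -- d(ι∘c, y) ≤ qwt (ι∘c) + qwt y ≤ s + r
      have hle : hammingDist (ι ∘ c) y ≤ qwt q L (ι ∘ c) + qwt q L y := by
        unfold hammingDist qwt
        calc (Finset.univ.filter (fun i => (ι ∘ c) i ≠ y i)).card
            ≤ ((Finset.univ.filter fun i => (((ι ∘ c) i : Fin q) : ℕ) ≠ 0) ∪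
               (Finset.univ.filter fun i => ((y i : Fin q) : ℕ) ≠ 0)).card := by
              apply Finset.card_le_card
              intro i hi
              simp only [Finset.mem_filter, Finset.mem_union, Finset.mem_univ, true_and] at hi ⊢
              by_contra h
              push_neg at h
              obtain ⟨h1, h2⟩ := h
              apply hi
              apply Fin.ext
              simp only [Function.comp_apply, hι] at h1 ⊢
              omega
          _ ≤ _ := Finset.card_union_le _ _
      have := hwt c
      have := hw c hc
      omega
    · intro hy
      -- binary projection
      set z : Fin L → ZMod 2 := fun i => if (y i : ℕ) = 0 then 0 else 1 with hz
      have hzn : hammingNorm z = qwt q L y := by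
        unfold hammingNorm qwt
        congr 1
        apply Finset.filter_congr
        intro i _
        by_cases h0 : (y i : ℕ) = 0 <;> simp [hz, h0]
      have hzball : z ∈ pball L 0 r := by
        rw [hball]
        simp only [Set.mem_iInter]
        intro c hc
        have hd : hammingDist c z ≤ hammingDist (ι ∘ c) y := by
          unfold hammingDist
          apply Finset.card_le_card
          intro i hi
          simp only [Finset.mem_filter, Finset.mem_univ, true_and, Function.comp_apply] at hi ⊢
          intro heq
          apply hi
          have hv : (c i).val = (y i : ℕ) := by rw [← hι, heq]
          show c i = if (y i : ℕ) = 0 then 0 else 1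
          by_cases h0 : (y i : ℕ) = 0
          · rw [if_pos h0]
            rcases hdichot (c i) with h | h
            · exact h
            · rw [h] at hv
              have : (1 : ZMod 2).val = 1 := rfl
              omega
          · rw [if_neg h0]
            rcases hdichot (c i) with h | h
            · rw [h] at hv
              have : (0 : ZMod 2).val = 0 := rfl
              omega
            · exact h
        have hb := hy (ι ∘ c) ⟨c, hc, rfl⟩
        exact le_trans hd hb
      have : hammingDist (0 : Fin L → ZMod 2) z ≤ r := hzball
      rw [hammingDist_zero_left] at this
      omega
end

section
/- Let r, s, L be nonnegative integers with s ≥ 1 and L ≥ 2s + r + 1, let q ≥ 2 be an integer, and let C be a q-ary (L,s,r) PPRIC code in Fin L → Fin q. If v ∈ (Fin L → Fin q) has the property that for every c ∈ C there exists a coordinate i with v_i = c_i ≠ 0, then wt(v) ≥ r + 3. -/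
/-- `C` is a `q`-ary `(L,s,r)` PPRIC code: a set of words of weight exactly `s` with
`{y | wt(y) ≤ r} = ⋂_{c ∈ C} {y | d(c,y) ≤ r+s}`. -/
def IsQPPRIC (q L s r : ℕ) (C : Set (Fin L → Fin q)) : Prop :=
  (∀ c ∈ C, qwt q L c = s) ∧
  {y : Fin L → Fin q | qwt q L y ≤ r} =
    ⋂ c ∈ C, {y : Fin L → Fin q | hammingDist c y ≤ r + s}

theorem stmt16 (L r s q : ℕ) (hs : 1 ≤ s) (hL : 2 * s + r + 1 ≤ L) (hq : 2 ≤ q)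
    (C : Set (Fin L → Fin q)) (hC : IsQPPRIC q L s r C)
    (v : Fin L → Fin q)
    (hv : ∀ c ∈ C, ∃ i : Fin L, v i = c i ∧ (c i : ℕ) ≠ 0) :
    r + 3 ≤ qwt q L v := by
  by_contra hcon
  push_neg at hcon
  obtain ⟨hC1, hC2⟩ := hC
  have hq1 : 1 < q := hq
  set S := Finset.univ.filter (fun i => (v i : ℕ) ≠ 0) with hS
  have hScard : S.card ≤ r + 2 := by
    have : qwt q L v = S.card := rfl
    omega
  obtain ⟨T, hST, -, hTcard⟩ := Finset.exists_subsuperset_card_eq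
    (Finset.subset_univ S) hScard (by simpa using by omega)
  set y : Fin L → Fin q := fun i =>
    if i ∈ T then (if (v i : ℕ) = 0 then ⟨1, hq1⟩ else v i) else ⟨0, by omega⟩ with hy
  have hsuppy : Finset.univ.filter (fun i => (y i : ℕ) ≠ 0) = T := by
    ext i
    simp only [Finset.mem_filter, Finset.mem_univ, true_and, hy]
    by_cases hiT : i ∈ T
    · by_cases hvi : (v i : ℕ) = 0 <;> simp [hiT, hvi]
    · simp [hiT]
  have hwty : qwt q L y = r + 2 := by
    rw [qwt, hsuppy, hTcard]
  have hyv : ∀ i, (v i : ℕ) ≠ 0 → y i = v i := by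
    intro i hi
    have hiT : i ∈ T := hST (by simp [hS, hi])
    simp [hy, hiT, hi]
  have hball : ∀ c ∈ C, hammingDist c y ≤ r + s := by
    intro c hc
    obtain ⟨i₀, hvi, hci⟩ := hv c hc
    have hyi : y i₀ = c i₀ := by rw [hyv i₀ (hvi ▸ hci)]; exact hvi
    set A := Finset.univ.filter (fun i => (c i : ℕ) ≠ 0) with hA
    have hAcard : A.card = s := hC1 c hc
    have hi₀ : i₀ ∈ A ∩ T := by
      refine Finset.mem_inter.mpr ⟨by simp [hA, hci], ?_⟩
      rw [← hsuppy]
      simp [hyi, hci]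
    have hUcard : (A ∪ T).card + (A ∩ T).card = A.card + T.card :=
      Finset.card_union_add_card_inter A T
    have hIcard : 1 ≤ (A ∩ T).card := Finset.card_pos.mpr ⟨i₀, hi₀⟩
    have hD : (Finset.univ.filter (fun i => c i ≠ y i)) ⊆ (A ∪ T).erase i₀ := by
      intro i hi
      simp only [Finset.mem_filter, Finset.mem_univ, true_and] at hi
      refine Finset.mem_erase.mpr ⟨?_, ?_⟩
      · rintro rfl; exact hi hyi.symm
      · rcases eq_or_ne ((c i : ℕ)) 0 with h0 | h0
        · refine Finset.mem_union_right _ ?_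
          rw [← hsuppy]
          simp only [Finset.mem_filter, Finset.mem_univ, true_and]
          intro hy0
          apply hi
          have : c i = y i := by
            apply Fin.ext
            omega
          exact this
        · exact Finset.mem_union_left _ (by simp [hA, h0])
    have hd : hammingDist c y = (Finset.univ.filter (fun i => c i ≠ y i)).card := rfl
    have := Finset.card_le_card hD
    have herase : ((A ∪ T).erase i₀).card = (A ∪ T).card - 1 :=
      Finset.card_erase_of_mem (Finset.mem_union_left _ (Finset.mem_of_mem_inter_left hi₀))
    omega
  have hmem : y ∈ ⋂ c ∈ C, {y : Fin L → Fin q | hammingDist c y ≤ r + s} := by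
    simp only [Set.mem_iInter, Set.mem_setOf_eq]
    exact hball
  rw [← hC2] at hmem
  simp only [Set.mem_setOf_eq] at hmem
  omega
end

section
/- Let n, L, s, r be nonnegative integers with s ≥ 1, L ≥ s(2r+3) and 2L ≤ n, and let x be an L-element subset of an n-element set. Then there exists a set C ⊆ W^x_s with |C| = 2r + 3 such that B_J(x, r) = ⋂_{c ∈ C} B_J(c, r + s). -/
open Finset

lemma blocks18 {α : Type*} [DecidableEq α] (m k : ℕ) :
    ∀ t : Finset α, m * k ≤ t.card →
    ∃ A : Fin m → Finset α, (∀ i, A i ⊆ t ∧ (A i).card = k) ∧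
      ∀ i j, i ≠ j → Disjoint (A i) (A j) := by
  induction m with
  | zero => exact fun t _ => ⟨fun i => ∅, fun i => i.elim0, fun i => i.elim0⟩
  | succ m ih =>
    intro t ht
    have hk : k ≤ t.card :=
      le_trans (Nat.le_mul_of_pos_left k (Nat.succ_pos m)) ht
    obtain ⟨a0, ha0, hc0⟩ := t.exists_subset_card_eq hk
    obtain ⟨A, hA, hAd⟩ := ih (t \ a0) (by
      rw [card_sdiff_of_subset ha0, hc0]
      have : (m + 1) * k = m * k + k := by ring
      omega)
    refine ⟨Fin.cons a0 A, ?_, ?_⟩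
    · intro i
      refine Fin.cases ?_ ?_ i
      · simpa using ⟨ha0, hc0⟩
      · intro j
        simpa using ⟨(hA j).1.trans (sdiff_subset), (hA j).2⟩
    · intro i j hij
      induction i using Fin.cases with
      | zero =>
        induction j using Fin.cases with
        | zero => exact absurd rfl hij
        | succ j' =>
          simp only [Fin.cons_zero, Fin.cons_succ]
          exact (sdiff_disjoint.mono_left (hA j').1).symm
      | succ i' =>
        induction j using Fin.cases with
        | zero =>
          simp only [Fin.cons_zero, Fin.cons_succ]
          exact sdiff_disjoint.mono_left (hA i').1
        | succ j' =>
          simp only [Fin.cons_succ]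
          exact hAd i' j' fun hh => hij (congrArg Fin.succ hh)

theorem stmt18 (n L s r : ℕ) (hs : 1 ≤ s) (hL : s * (2 * r + 3) ≤ L)
    (hn : 2 * L ≤ n) (x : Finset (Fin n)) (hx : x.card = L) :
    ∃ C : Finset (Finset (Fin n)),
      (∀ c ∈ C, c.card = L ∧ (x \ c).card = s) ∧
      C.card = 2 * r + 3 ∧
      {y : Finset (Fin n) | y.card = L ∧ (x \ y).card ≤ r} =
        ⋂ c ∈ C, {y : Finset (Fin n) | y.card = L ∧ (c \ y).card ≤ r + s} := by
  have hL' : (2 * r + 3) * s ≤ L := by rw [mul_comm]; exact hL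
  have hsL : s ≤ L := by nlinarith
  obtain ⟨A, hA, hAd⟩ := blocks18 (2 * r + 3) s x (by rw [hx]; exact hL')
  have hcompl : (2 * r + 3) * s ≤ xᶜ.card := by
    rw [card_compl, hx, Fintype.card_fin]
    omega
  obtain ⟨B, hB, hBd⟩ := blocks18 (2 * r + 3) s xᶜ hcompl
  have hBx : ∀ i, Disjoint (B i) x := fun i =>
    Finset.disjoint_left.2 fun a haB hax => (Finset.mem_compl.1 ((hB i).1 haB)) hax
  set c : Fin (2 * r + 3) → Finset (Fin n) := fun i => (x \ A i) ∪ B i with hc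
  have hcdisj : ∀ i, Disjoint (x \ A i) (B i) :=
    fun i => (hBx i).symm.mono_left sdiff_subset
  have hccard : ∀ i, (c i).card = L := by
    intro i
    rw [hc, card_union_of_disjoint (hcdisj i), card_sdiff_of_subset (hA i).1, hx, (hA i).2,
      (hB i).2]
    omega
  have hxc : ∀ i, x \ c i = A i := by
    intro i
    ext a
    simp only [hc, mem_sdiff, mem_union, not_or, not_and, not_not]
    constructor
    · rintro ⟨hax, h1, _⟩; exact h1 hax
    · intro ha
      have hax := (hA i).1 ha
      exact ⟨hax, fun _ => ha, fun hb => absurd hax (Finset.disjoint_left.1 (hBx i) hb)⟩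
  have hcinj : Function.Injective c := by
    intro i j hij
    by_contra hne
    obtain ⟨a, ha⟩ := Finset.card_pos.1 (by rw [(hB i).2]; omega : 0 < (B i).card)
    have : a ∈ c j := by rw [← hij]; exact Finset.mem_union_right _ ha
    rw [hc] at this
    rcases Finset.mem_union.1 this with h | h
    · exact Finset.disjoint_left.1 (hBx i) ha (Finset.mem_sdiff.1 h).1
    · exact Finset.disjoint_left.1 (hBd i j hne) ha h
  refine ⟨Finset.image c Finset.univ, ?_, ?_, ?_⟩
  · intro cc hcc
    obtain ⟨i, _, rfl⟩ := Finset.mem_image.1 hcc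
    exact ⟨hccard i, by rw [hxc i]; exact (hA i).2⟩
  · rw [Finset.card_image_of_injective _ hcinj, Finset.card_univ, Fintype.card_fin]
  · ext y
    simp only [Set.mem_setOf_eq, Set.mem_iInter, Finset.mem_image, Finset.mem_univ,
      true_and, forall_exists_index]
    constructor
    · rintro ⟨hyL, hyr⟩ cc i rfl
      refine ⟨hyL, ?_⟩
      have hsub : c i \ y ⊆ (x \ y) ∪ B i := by
        intro a ha
        obtain ⟨hac, hay⟩ := Finset.mem_sdiff.1 ha
        rcases Finset.mem_union.1 hac with h | h
        · exact Finset.mem_union_left _ (Finset.mem_sdiff.2 ⟨(Finset.mem_sdiff.1 h).1, hay⟩)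
        · exact Finset.mem_union_right _ h
      calc (c i \ y).card ≤ ((x \ y) ∪ B i).card := Finset.card_le_card hsub
        _ ≤ (x \ y).card + (B i).card := Finset.card_union_le _ _
        _ ≤ r + s := by rw [(hB i).2]; omega
    · intro h
      have hyL : y.card = L := (h (c 0) 0 rfl).1
      refine ⟨hyL, ?_⟩
      set d := (x \ y).card with hd
      have hyx : (y \ x).card = d := (Finset.card_sdiff_comm (by rw [hyL, hx])).symm
      -- per-index inequality
      have key : ∀ i : Fin (2 * r + 3),
          d + s ≤ (r + s) + ((x \ y) ∩ A i).card + (B i ∩ y).card := by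
        intro i
        have h1 : ((x \ y) \ A i).card + ((x \ y) ∩ A i).card = d :=
          Finset.card_sdiff_add_card_inter _ _
        have h2 : (B i \ y).card + (B i ∩ y).card = s := by
          rw [Finset.card_sdiff_add_card_inter, (hB i).2]
        have hdj : Disjoint ((x \ y) \ A i) (B i \ y) :=
          (hBx i).symm.mono (sdiff_subset.trans sdiff_subset) sdiff_subset
        have hsub : ((x \ y) \ A i) ∪ (B i \ y) ⊆ c i \ y := by
          intro a ha
          rcases Finset.mem_union.1 ha with ha | ha
          · have hm := Finset.mem_sdiff.1 ha
            have hm2 := Finset.mem_sdiff.1 hm.1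
            exact Finset.mem_sdiff.2
              ⟨Finset.mem_union_left _ (Finset.mem_sdiff.2 ⟨hm2.1, hm.2⟩), hm2.2⟩
          · obtain ⟨haB, hay⟩ := Finset.mem_sdiff.1 ha
            exact Finset.mem_sdiff.2 ⟨Finset.mem_union_right _ haB, hay⟩
        have h3 : ((x \ y) \ A i).card + (B i \ y).card ≤ r + s := by
          rw [← Finset.card_union_of_disjoint hdj]
          exact le_trans (Finset.card_le_card hsub) (h (c i) i rfl).2
        omega
      -- sums of the intersection families
      have hsumA : ∑ i : Fin (2 * r + 3), ((x \ y) ∩ A i).card ≤ d := by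
        rw [← Finset.card_biUnion (fun i _ j _ hij =>
          ((hAd i j hij).mono inter_subset_right inter_subset_right))]
        exact Finset.card_le_card (by
          intro a ha
          obtain ⟨i, _, hai⟩ := Finset.mem_biUnion.1 ha
          exact (Finset.mem_inter.1 hai).1)
      have hsumB : ∑ i : Fin (2 * r + 3), (B i ∩ y).card ≤ d := by
        rw [← Finset.card_biUnion (fun i _ j _ hij =>
          ((hBd i j hij).mono inter_subset_left inter_subset_left))]
        rw [← hyx]
        exact Finset.card_le_card (by
          intro a ha
          obtain ⟨i, _, hai⟩ := Finset.mem_biUnion.1 ha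
          obtain ⟨haB, hay⟩ := Finset.mem_inter.1 hai
          exact Finset.mem_sdiff.2 ⟨hay, fun hax => Finset.disjoint_left.1 (hBx i) haB hax⟩)
      have hsum : (2 * r + 3) * (d + s) ≤ (2 * r + 3) * (r + s) + d + d := by
        calc (2 * r + 3) * (d + s)
            = ∑ _i : Fin (2 * r + 3), (d + s) := by
              simp [Finset.sum_const, Finset.card_univ, mul_comm]
          _ ≤ ∑ i : Fin (2 * r + 3), ((r + s) + ((x \ y) ∩ A i).card + (B i ∩ y).card) :=
              Finset.sum_le_sum fun i _ => key i
          _ = (2 * r + 3) * (r + s) + (∑ i : Fin (2 * r + 3), ((x \ y) ∩ A i).card)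
                + ∑ i : Fin (2 * r + 3), (B i ∩ y).card := by
              rw [Finset.sum_add_distrib, Finset.sum_add_distrib]
              simp [Finset.sum_const, Finset.card_univ, mul_comm]
          _ ≤ (2 * r + 3) * (r + s) + d + d := by omega
      by_contra hdr
      push_neg at hdr
      nlinarith
end

section
/- Let n, L, s, r be nonnegative integers with s ≥ 1, L ≥ s(2r+3) and 2L ≤ n, and let x be an L-element subset of an n-element set. Then every set C ⊆ W^x_s satisfying B_J(x, r) = ⋂_{c ∈ C} B_J(c, r + s) has |C| ≥ 2r + 3. -/
theorem stmt19 (n L s r : ℕ) (hs : 1 ≤ s) (hL : s * (2 * r + 3) ≤ L)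
    (hn : 2 * L ≤ n) (x : Finset (Fin n)) (hx : x.card = L)
    (C : Finset (Finset (Fin n)))
    (hCmem : ∀ c ∈ C, c.card = L ∧ (x \ c).card = s)
    (hCeq : {y : Finset (Fin n) | y.card = L ∧ (x \ y).card ≤ r} =
      ⋂ c ∈ C, {y : Finset (Fin n) | y.card = L ∧ (c \ y).card ≤ r + s}) :
    2 * r + 3 ≤ C.card := by
  classical
  by_contra hlt
  push_neg at hlt
  have hCcard : C.card ≤ 2 * r + 2 := by omega
  have hL3 : 2 * r + 3 ≤ L := le_trans (by nlinarith) hL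
  have hr1L : r + 1 ≤ L := by omega
  have hnpos : 0 < n := by omega
  -- each c ∈ C has (c \ x).card = s
  have hcx : ∀ c ∈ C, (c \ x).card = s := by
    intro c hc
    obtain ⟨hc1, hc2⟩ := hCmem c hc
    rw [Finset.card_sdiff_comm (by rw [hc1, hx])]
    exact hc2
  -- split C
  obtain ⟨C1, hC1sub, hC1card⟩ := Finset.exists_subset_card_eq
    (min_le_right (r + 1) C.card : min (r+1) C.card ≤ C.card)
  set C2 := C \ C1 with hC2def
  have hC2card : C2.card ≤ r + 1 := by
    have h : C2.card = C.card - C1.card := by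
      rw [hC2def]; exact Finset.card_sdiff_of_subset hC1sub
    rw [hC1card] at h
    rcases Nat.le_total (r + 1) C.card with hh | hh
    · rw [min_eq_left hh] at h; omega
    · rw [min_eq_right hh] at h; omega
  have hC1card' : C1.card ≤ r + 1 := by rw [hC1card]; exact min_le_left _ _
  -- choice functions
  have hne1 : ∀ c ∈ C1, (x \ c).Nonempty := by
    intro c hc
    rw [← Finset.card_pos, (hCmem c (hC1sub hc)).2]; omega
  have hne2 : ∀ c ∈ C2, (c \ x).Nonempty := by
    intro c hc
    rw [← Finset.card_pos, hcx c (Finset.sdiff_subset hc)]; omega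
  set f : Finset (Fin n) → Fin n := fun c =>
    if h : (x \ c).Nonempty then h.choose else ⟨0, hnpos⟩ with hf
  set g : Finset (Fin n) → Fin n := fun c =>
    if h : (c \ x).Nonempty then h.choose else ⟨0, hnpos⟩ with hg
  have hfmem : ∀ c ∈ C1, f c ∈ x \ c := by
    intro c hc
    simp only [hf, dif_pos (hne1 c hc)]
    exact (hne1 c hc).choose_spec
  have hgmem : ∀ c ∈ C2, g c ∈ c \ x := by
    intro c hc
    simp only [hg, dif_pos (hne2 c hc)]
    exact (hne2 c hc).choose_spec
  -- build T
  have hT0sub : C1.image f ⊆ x := by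
    intro a ha
    obtain ⟨c, hc, rfl⟩ := Finset.mem_image.mp ha
    exact (Finset.mem_sdiff.mp (hfmem c hc)).1
  have hT0card : (C1.image f).card ≤ r + 1 :=
    le_trans (Finset.card_image_le) hC1card'
  obtain ⟨T, hT0T, hTx, hTcard⟩ :=
    Finset.exists_subsuperset_card_eq hT0sub hT0card (by omega)
  -- build A inside xᶜ
  have hA0sub : C2.image g ⊆ xᶜ := by
    intro a ha
    obtain ⟨c, hc, rfl⟩ := Finset.mem_image.mp ha
    simp only [Finset.mem_compl]
    exact (Finset.mem_sdiff.mp (hgmem c hc)).2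
  have hcomplcard : r + 1 ≤ (xᶜ).card := by
    rw [Finset.card_compl, hx, Fintype.card_fin]; omega
  have hA0card : (C2.image g).card ≤ r + 1 :=
    le_trans (Finset.card_image_le) hC2card
  obtain ⟨A, hA0A, hAx, hAcard⟩ :=
    Finset.exists_subsuperset_card_eq hA0sub hA0card hcomplcard
  have hAdisj : Disjoint A x := by
    intro u hu1 hu2 v hv
    have := hAx (hu1 hv)
    simp only [Finset.mem_compl] at this
    exact absurd (hu2 hv) this
  -- define y
  set y : Finset (Fin n) := (x \ T) ∪ A with hy
  have hycard : y.card = L := by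
    rw [hy, Finset.card_union_of_disjoint
      (Finset.disjoint_of_subset_right Finset.sdiff_subset hAdisj).symm,
      Finset.card_sdiff_of_subset hTx, hx, hTcard, hAcard]
    omega
  have hxy : x \ y = T := by
    ext u
    simp only [hy, Finset.mem_sdiff, Finset.mem_union, not_or, Finset.mem_sdiff]
    constructor
    · rintro ⟨hux, h1, _⟩
      by_contra h
      exact h1 ⟨hux, h⟩
    · intro hu
      refine ⟨hTx hu, fun h => h.2 hu, fun h => ?_⟩
      exact (Finset.mem_compl.mp (hAx h)) (hTx hu)
  -- y is in the RHS
  have hyR : y ∈ ⋂ c ∈ C, {y : Finset (Fin n) | y.card = L ∧ (c \ y).card ≤ r + s} := by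
    simp only [Set.mem_iInter, Set.mem_setOf_eq]
    intro c hc
    refine ⟨hycard, ?_⟩
    have hsub : c \ y ⊆ ((c \ x) \ A) ∪ (T ∩ c) := by
      intro u hu
      simp only [Finset.mem_sdiff, hy, Finset.mem_union, not_or,
        Finset.mem_inter] at hu ⊢
      obtain ⟨huc, h1, h2⟩ := hu
      by_cases hux : u ∈ x
      · right
        refine ⟨?_, huc⟩
        by_contra h
        exact h1 ⟨hux, h⟩
      · left; exact ⟨⟨huc, hux⟩, h2⟩
    refine le_trans (Finset.card_le_card hsub) (le_trans (Finset.card_union_le _ _) ?_)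
    by_cases hc1 : c ∈ C1
    · -- T hits x \ c, so T ∩ c small
      have hfc := hfmem c hc1
      have hfT : f c ∈ T := hT0T (Finset.mem_image_of_mem f hc1)
      have h1 : T ∩ c ⊆ T.erase (f c) := by
        intro u hu
        simp only [Finset.mem_inter] at hu
        refine Finset.mem_erase.mpr ⟨?_, hu.1⟩
        rintro rfl
        exact (Finset.mem_sdiff.mp hfc).2 hu.2
      have h2 : (T ∩ c).card ≤ r := by
        have := Finset.card_le_card h1
        rw [Finset.card_erase_of_mem hfT, hTcard] at this
        omega
      have h3 : ((c \ x) \ A).card ≤ s := by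
        refine le_trans (Finset.card_le_card Finset.sdiff_subset) ?_
        rw [hcx c hc]
      omega
    · -- c ∈ C2 : A hits c \ x
      have hc2 : c ∈ C2 := Finset.mem_sdiff.mpr ⟨hc, hc1⟩
      have hgc := hgmem c hc2
      have hgA : g c ∈ A := hA0A (Finset.mem_image_of_mem g hc2)
      have h1 : (c \ x) \ A ⊆ (c \ x).erase (g c) := by
        intro u hu
        simp only [Finset.mem_sdiff] at hu
        refine Finset.mem_erase.mpr ⟨?_, Finset.mem_sdiff.mpr ⟨hu.1.1, hu.1.2⟩⟩
        rintro rfl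
        exact hu.2 hgA
      have h2 : ((c \ x) \ A).card ≤ s - 1 := by
        have := Finset.card_le_card h1
        rw [Finset.card_erase_of_mem hgc, hcx c hc] at this
        exact this
      have h3 : (T ∩ c).card ≤ r + 1 := by
        have := Finset.card_le_card (Finset.inter_subset_left : T ∩ c ⊆ T)
        omega
      omega
  rw [← hCeq] at hyR
  simp only [Set.mem_setOf_eq] at hyR
  rw [hxy, hTcard] at hyR
  omega
end
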